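/- arXiv:1504.04192 — 7 statements merged into one kernel-verified Lean document; each statement's English description precedes it below -/
import Mathlib

section
/- Let D be a non-principal ultrafilter on ω, s ∈ ω^{<ω}, and ⟨φ_k⟩_{k<ω} a sequence of slaloms each of width at most w such that (s,φ_k) is a condition of E for every k. Then the D-limit condition q = (s, lim_D ⟨φ_k⟩) is a condition of E (of width at most w), and q ≤ no p_k in general, but: for every finite extension t ⊇ s with (t, ψ) ≤ q in E and every k* < ω, there exists k > k* such that (t,ψ) is compatible with (s,φ_k). In particular, q forces in E that {k : (s,φ_k) ∈ G} is infinite. -/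
/-- A pair `(s, φ)` is a condition of the eventually different forcing `E` if `φ` is a
slalom of some finite width `w` (all values of size `≤ w`) and the stem `s` avoids `φ`. -/
def EPred (p : List ℕ × (ℕ → Set ℕ)) : Prop :=
  (∃ w : ℕ, ∀ i, (p.2 i).encard ≤ w) ∧ ∀ (i : ℕ) (h : i < p.1.length), p.1.get ⟨i, h⟩ ∉ p.2 i

/-- The eventually different forcing `E`. -/
def ECond := {p : List ℕ × (ℕ → Set ℕ) // EPred p}

/-- The order of `E`: `q ≤ p` iff the stem of `p` is an initial segment of the stem of `q`
and the slalom of `q` contains the slalom of `p` pointwise. -/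
def ECle (q p : ECond) : Prop :=
  p.val.1 <+: q.val.1 ∧ ∀ i, p.val.2 i ⊆ q.val.2 i

/-- The `D`-limit of a sequence of subsets of `ω`. -/
def limD (D : Ultrafilter ℕ) (A : ℕ → Set ℕ) : Set ℕ :=
  {n | {k | n ∈ A k} ∈ D}

/-- Let `D` be a non-principal ultrafilter, `s` a stem and `⟨φ_k⟩` a sequence of slaloms of
width at most `w` with each `(s, φ_k)` a condition of `E`.  Then the `D`-limit
`q = (s, lim_D φ_k)` is a condition of `E` of width at most `w`, and every condition
extending `q` is compatible with infinitely many of the `(s, φ_k)`; in particular `q`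
forces in `E` that `{k : (s, φ_k) ∈ G}` is infinite. -/
theorem stmt_3 (D : Ultrafilter ℕ) (hD : (D : Filter ℕ) ≤ Filter.cofinite)
    (s : List ℕ) (w : ℕ) (φ : ℕ → ℕ → Set ℕ)
    (hwidth : ∀ k n, (φ k n).encard ≤ w)
    (hcond : ∀ k, EPred (s, φ k)) :
    ∃ hq : EPred (s, fun n => limD D (fun k => φ k n)),
      (∀ n, (limD D (fun k => φ k n)).encard ≤ w) ∧
      ∀ r : ECond, ECle r ⟨(s, fun n => limD D (fun k => φ k n)), hq⟩ →
        ∀ k₀ : ℕ, ∃ k > k₀, ∃ r' : ECond, ECle r' r ∧ ECle r' ⟨(s, φ k), hcond k⟩ := by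
  -- width bound for the D-limit
  have hlw : ∀ n, (limD D (fun k => φ k n)).encard ≤ w := by
    intro n
    by_contra h
    push_neg at h
    obtain ⟨F, hF, hFcard⟩ := Set.exists_subset_encard_eq
      (show ((w : ℕ∞) + 1) ≤ _ from Order.add_one_le_of_lt h)
    have hFfin : F.Finite := Set.finite_of_encard_eq_coe (k := w + 1) (by
      rw [hFcard]; push_cast; ring)
    have hmem : (⋂ m ∈ F, {k | m ∈ φ k n}) ∈ (D : Filter ℕ) := by
      rw [Filter.biInter_mem hFfin]
      intro m hm
      exact hF hm
    obtain ⟨k, hk⟩ := Filter.nonempty_of_mem hmem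
    simp only [Set.mem_iInter, Set.mem_setOf_eq] at hk
    have hsub : F ⊆ φ k n := fun m hm => hk m hm
    have h1 : (w : ℕ∞) + 1 ≤ (φ k n).encard := hFcard ▸ Set.encard_mono hsub
    have h2 := hwidth k n
    have : (w : ℕ∞) + 1 ≤ w := le_trans h1 h2
    exact absurd ((ENat.add_one_le_iff (ENat.coe_ne_top w)).1 this) (lt_irrefl _)
  have hq : EPred (s, fun n => limD D (fun k => φ k n)) := by
    refine ⟨⟨w, hlw⟩, ?_⟩
    intro i h hmem
    have : {k | s.get ⟨i, h⟩ ∈ φ k i} = ∅ := by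
      ext k
      simp only [Set.mem_setOf_eq, Set.mem_empty_iff_false, iff_false]
      exact (hcond k).2 i h
    change {k | s.get ⟨i, h⟩ ∈ φ k i} ∈ (D : Filter ℕ) at hmem
    exact Filter.empty_notMem (D : Filter ℕ) (by rw [← this]; exact hmem)
  refine ⟨hq, hlw, ?_⟩
  rintro ⟨⟨t, ψ⟩, hr⟩ ⟨hpre, hsub⟩ k₀
  simp only at hpre hsub
  -- the good set of indices
  set B : Set ℕ := ⋂ i ∈ Set.Iio t.length,
    {k | ∀ h : i < t.length, t.get ⟨i, h⟩ ∉ φ k i} with hB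
  have hBD : B ∈ (D : Filter ℕ) := by
    rw [hB, Filter.biInter_mem (Set.finite_Iio t.length)]
    intro i hi
    rw [Set.mem_Iio] at hi
    have havoid : t.get ⟨i, hi⟩ ∉ ψ i := hr.2 i hi
    have hnot : t.get ⟨i, hi⟩ ∉ limD D (fun k => φ k i) :=
      fun hmem => havoid (hsub i hmem)
    have hnotD : {k | t.get ⟨i, hi⟩ ∈ φ k i} ∉ (D : Filter ℕ) := hnot
    have : {k | t.get ⟨i, hi⟩ ∈ φ k i}ᶜ ∈ D := (Ultrafilter.compl_mem_iff_notMem).2 hnotD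
    refine Filter.mem_of_superset this ?_
    intro k hk h'
    exact hk
  have hBinf : B.Infinite := by
    intro hBfin
    have : Bᶜ ∈ Filter.cofinite := by
      rw [Filter.mem_cofinite, compl_compl]; exact hBfin
    have hc : Bᶜ ∈ (D : Filter ℕ) := hD this
    have : B ∩ Bᶜ ∈ (D : Filter ℕ) := Filter.inter_mem hBD hc
    rw [Set.inter_compl_self] at this
    exact Filter.empty_notMem _ this
  obtain ⟨k, hkB, hk₀⟩ := hBinf.exists_gt k₀
  obtain ⟨wψ, hwψ⟩ := hr.1
  have hr'pred : EPred (t, fun i => ψ i ∪ φ k i) := by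
    constructor
    · refine ⟨wψ + w, fun i => ?_⟩
      calc (ψ i ∪ φ k i).encard ≤ (ψ i).encard + (φ k i).encard := Set.encard_union_le _ _
        _ ≤ (wψ : ℕ∞) + w := add_le_add (hwψ i) (hwidth k i)
        _ = ((wψ + w : ℕ) : ℕ∞) := by push_cast; ring
    · intro i h hmem
      rcases hmem with hmem | hmem
      · exact hr.2 i h hmem
      · simp only [hB, Set.mem_iInter, Set.mem_setOf_eq] at hkB
        exact hkB i (Set.mem_Iio.2 h) h hmem
  refine ⟨k, hk₀, ⟨(t, fun i => ψ i ∪ φ k i), hr'pred⟩, ⟨List.prefix_refl t, fun i => Set.subset_union_left⟩, ⟨hpre, fun i => Set.subset_union_right⟩⟩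
end

section
/- Let κ be an uncountable regular cardinal and B = {f_η : η < κ} ⊆ ω^ω a family such that for every K ⊆ κ of size κ, the subfamily {f_η : η ∈ K} is unbounded with respect to eventual domination ≤*. Then for every K ⊆ κ of size κ and every m* < ω, there exist m ≥ m* and a strictly increasing sequence ⟨η_k⟩_{k<ω} in K such that ⟨f_{η_k}(m)⟩_{k<ω} is strictly increasing. -/
open Cardinal Filter

/-- Eventual domination on `ω^ω`. -/
def leStar (f g : ℕ → ℕ) : Prop := ∀ᶠ n in atTop, f n ≤ g n

/-- Let `κ` be an uncountable regular cardinal and `B = {f_η : η < κ} ⊆ ω^ω` a family all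
of whose subfamilies of size `κ` are `≤*`-unbounded.  Then for every `K ⊆ κ` of size `κ`
and every `m* < ω` there are `m ≥ m*` and a strictly increasing sequence `⟨η_k⟩_{k<ω}` in
`K` such that `⟨f_{η_k}(m)⟩_{k<ω}` is strictly increasing. -/
theorem stmt_6 (κ : Cardinal) (hreg : κ.IsRegular) (hunc : ℵ₀ < κ)
    (f : κ.ord.ToType → ℕ → ℕ)
    (hB : ∀ K : Set κ.ord.ToType, #K = κ →
      ¬ ∃ g : ℕ → ℕ, ∀ η ∈ K, leStar (f η) g) :
    ∀ K : Set κ.ord.ToType, #K = κ → ∀ m₀ : ℕ,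
      ∃ m ≥ m₀, ∃ η : ℕ → κ.ord.ToType,
        (∀ k, η k ∈ K) ∧ StrictMono η ∧ StrictMono (fun k => f (η k) m) := by
  intro K hK m₀
  have hmkT : #(κ.ord.ToType) = κ := by
    rw [Cardinal.mk_toType, Cardinal.card_ord]
  have hle : ∀ s : Set κ.ord.ToType, #s ≤ κ := fun s => le_of_le_of_eq (Cardinal.mk_set_le s) hmkT
  -- Step 1: find `m ≥ m₀` such that every tail `{η ∈ K | n < f η m}` has size `κ`.
  have key : ∃ m ≥ m₀, ∀ n : ℕ, #{η : κ.ord.ToType | η ∈ K ∧ n < f η m} = κ := by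
    by_contra hcon
    push_neg at hcon
    -- choose bounds
    have hch : ∀ m : ℕ, ∃ n : ℕ, m ≥ m₀ → #{η : κ.ord.ToType | η ∈ K ∧ n < f η m} < κ := by
      intro m
      by_cases hm : m ≥ m₀
      · obtain ⟨n, hn⟩ := hcon m hm
        exact ⟨n, fun _ => lt_of_le_of_ne (hle _) hn⟩
      · exact ⟨0, fun h => absurd h hm⟩
    choose g hg using hch
    set S : ℕ → Set κ.ord.ToType := fun m => {η | η ∈ K ∧ g m < f η m} with hS
    set U : Set κ.ord.ToType := ⋃ i : ℕ, S (i + m₀) with hU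
    have hUlt : #U < κ := by
      have h := Cardinal.mk_iUnion_le_lift (fun i : ℕ => S (i + m₀))
      simp only [Cardinal.lift_uzero, Cardinal.mk_nat, Cardinal.lift_aleph0] at h
      refine lt_of_le_of_lt h ?_
      apply Cardinal.mul_lt_of_lt hreg.aleph0_le hunc
      exact Cardinal.iSup_lt_lift_of_isRegular hreg (by simpa using hunc)
        (fun i => by simpa [hS] using hg (i + m₀) (Nat.le_add_left m₀ i))
    set K' : Set κ.ord.ToType := K \ U with hK'
    have hK'κ : #K' = κ := by
      refine le_antisymm (hle _) ?_
      by_contra hlt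
      push_neg at hlt
      have hsub : K ⊆ K' ∪ U := fun x hx => by
        by_cases hxU : x ∈ U
        · exact Or.inr hxU
        · exact Or.inl ⟨hx, hxU⟩
      have : κ ≤ #K' + #U := hK.symm.trans_le
        (le_trans (Cardinal.mk_le_mk_of_subset hsub) (Cardinal.mk_union_le _ _))
      exact absurd this (not_le_of_gt (Cardinal.add_lt_of_lt hreg.aleph0_le hlt hUlt))
    refine hB K' hK'κ ⟨g, fun η hη => ?_⟩
    refine Filter.eventually_atTop.2 ⟨m₀, fun n hn => ?_⟩
    by_contra hgt
    push_neg at hgt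
    have : η ∈ U := Set.mem_iUnion.2 ⟨n - m₀, by
      have hnm : n - m₀ + m₀ = n := Nat.sub_add_cancel hn
      rw [hS]
      simp only [Set.mem_setOf_eq, hnm]
      exact ⟨hη.1, hgt⟩⟩
    exact hη.2 this
  obtain ⟨m, hm, hbig⟩ := key
  -- Step 2: construct the sequence by recursion.
  have hIic : ∀ x : κ.ord.ToType, #(Set.Iic x) < κ := by
    intro x
    have h1 : (Set.Iic x) = Set.Iio x ∪ {x} := by
      ext y; simp [le_iff_lt_or_eq]
    rw [h1]
    refine lt_of_le_of_lt (Cardinal.mk_union_le _ _) ?_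
    apply Cardinal.add_lt_of_lt hreg.aleph0_le (Cardinal.mk_Iio_ord_toType x)
    simpa using (Cardinal.one_lt_aleph0.trans hunc)
  have hne : ∀ x : κ.ord.ToType,
      {η : κ.ord.ToType | η ∈ K ∧ f x m < f η m ∧ x < η}.Nonempty := by
    intro x
    by_contra h
    rw [Set.not_nonempty_iff_eq_empty] at h
    have hsub : {η : κ.ord.ToType | η ∈ K ∧ f x m < f η m} ⊆ Set.Iic x := by
      intro y hy
      by_contra hyx
      have : y ∈ ({η : κ.ord.ToType | η ∈ K ∧ f x m < f η m ∧ x < η}) :=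
        ⟨hy.1, hy.2, not_le.1 hyx⟩
      rw [h] at this
      exact this
    have := (hbig (f x m)) ▸ Cardinal.mk_le_mk_of_subset hsub
    exact absurd this (not_le_of_gt (hIic x))
  have hK0 : K.Nonempty := by
    rw [← Set.nonempty_coe_sort, ← Cardinal.mk_ne_zero_iff, hK]
    exact hreg.pos.ne'
  obtain ⟨η₀, hη₀⟩ := hK0
  let next : κ.ord.ToType → κ.ord.ToType := fun x => (hne x).choose
  have hnext : ∀ x, next x ∈ K ∧ f x m < f (next x) m ∧ x < next x :=
    fun x => (hne x).choose_spec
  refine ⟨m, hm, fun k => next^[k] η₀, ?_, ?_, ?_⟩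
  · intro k
    cases k with
    | zero => exact hη₀
    | succ k =>
      show next^[k+1] η₀ ∈ K
      rw [Function.iterate_succ_apply']
      exact (hnext _).1
  · apply strictMono_nat_of_lt_succ
    intro k
    show next^[k] η₀ < next^[k+1] η₀
    rw [Function.iterate_succ_apply']
    exact (hnext _).2.2
  · apply strictMono_nat_of_lt_succ
    intro k
    show f (next^[k] η₀) m < f (next^[k+1] η₀) m
    rw [Function.iterate_succ_apply']
    exact (hnext _).2.1
end

section
/- Engelking–Karłowicz theorem: Let θ be an uncountable regular cardinal and χ a cardinal with χ^{<θ} = χ. Let δ < (2^χ)^+ be an ordinal and ⟨A_α⟩_{α<δ} a sequence of sets each of size ≤ χ. Then there is a family {h_ε : ε < χ} of functions h_ε ∈ ∏_{α<δ} A_α such that every partial function x with domain a subset of δ of size < θ and x(α) ∈ A_α for all α ∈ dom(x) is extended by some h_ε (i.e., x ⊆ h_ε). -/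
open Cardinal

noncomputable section

namespace EK7

/-- The ordinal below `θ.ord` corresponding to an element of `θ.ord.ToType`. -/
def od (θ : Cardinal) (b : θ.ord.ToType) : Ordinal :=
  ((Ordinal.ToType.mk (o := θ.ord)).symm b).1

theorem od_lt (θ : Cardinal) (b : θ.ord.ToType) : (od θ b).card < θ :=
  Cardinal.lt_ord.mp ((Ordinal.ToType.mk (o := θ.ord)).symm b).2

/-- Index type for the Engelking–Karłowicz family. -/
def Idx (θ χ : Cardinal) : Type :=
  Σ b₁ : θ.ord.ToType, Σ b₂ : θ.ord.ToType,
    ((od θ b₁).ToType → χ.ord.ToType) ×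
      ((od θ b₂).ToType → (((od θ b₁).ToType → Prop) × χ.ord.ToType))

open scoped Classical in
/-- The function associated to an index. -/
def H (θ χ : Cardinal) (δ : Ordinal) (A : δ.ToType → Type) (ne : ∀ α, Nonempty (A α))
    (u : δ.ToType → (χ.ord.ToType → Prop)) (eA : ∀ α, A α ↪ χ.ord.ToType)
    (ι : Idx θ χ) (α : δ.ToType) : A α :=
  if hp : ∃ j, (ι.2.2.2 j).1 = fun i => u α (ι.2.2.1 i) then
    Function.invFun (eA α) ((ι.2.2.2 hp.choose).2)
  else (ne α).some

end EK7

end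

/-- Engelking–Karłowicz: if `θ` is uncountable regular, `χ^{<θ} = χ`, `δ < (2^χ)⁺` and
`⟨A_α⟩_{α<δ}` is a sequence of nonempty sets of size `≤ χ`, then there are `χ` many total
choice functions `⟨h_ε⟩_{ε<χ}` such that every partial choice function with domain of size
`< θ` is extended by some `h_ε`. -/
theorem stmt_7 (θ χ : Cardinal) (hθreg : θ.IsRegular) (hθunc : ℵ₀ < θ)
    (hχ : χ ^< θ = χ) (δ : Ordinal) (hδ : δ < (Order.succ ((2 : Cardinal) ^ χ)).ord)
    (A : δ.ToType → Type) (hA : ∀ α, #(A α) ≤ χ) (hne : ∀ α, Nonempty (A α)) :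
    ∃ h : χ.ord.ToType → (∀ α, A α),
      ∀ E : Set δ.ToType, #E < θ →
        ∀ x : ∀ α : E, A α, ∃ ε, ∀ α : E, h ε α = x α := by
  classical
  have hχ0 : χ ≠ 0 := by
    intro h0
    have h1 : (0 : Cardinal) ^ (0 : Cardinal) ≤ (0 : Cardinal) ^< θ :=
      Cardinal.le_powerlt 0 (aleph0_pos.trans hθunc)
    rw [h0] at hχ
    rw [hχ] at h1
    simp at h1
  haveI hKne : Nonempty χ.ord.ToType := by
    rw [Ordinal.nonempty_toType_iff]
    intro h0
    apply hχ0
    have := Cardinal.card_ord χ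
    rw [h0] at this
    simpa using this.symm
  by_cases hχ2 : χ < 2
  · -- trivial case: all `A α` are subsingletons
    have hχ1 : χ ≤ 1 := by
      have h2a : (2 : Cardinal) < ℵ₀ := by exact_mod_cast Cardinal.nat_lt_aleph0 2
      obtain ⟨n, rfl⟩ := Cardinal.lt_aleph0.mp (hχ2.trans h2a)
      have hn : n < 2 := by exact_mod_cast hχ2
      exact_mod_cast Nat.lt_succ_iff.mp hn
    have hsub : ∀ α, Subsingleton (A α) := fun α =>
      Cardinal.le_one_iff_subsingleton.mp ((hA α).trans hχ1)
    refine ⟨fun _ α => (hne α).some, fun E hE x => ⟨Classical.arbitrary _, fun a => ?_⟩⟩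
    haveI := hsub a.1
    exact Subsingleton.elim _ _
  push_neg at hχ2
  -- χ is infinite and ≥ θ
  have hχinf : ℵ₀ ≤ χ := by
    calc ℵ₀ ≤ 2 ^ ℵ₀ := (Cardinal.cantor ℵ₀).le
      _ ≤ χ ^ ℵ₀ := Cardinal.power_le_power_right hχ2
      _ ≤ χ ^< θ := Cardinal.le_powerlt χ hθunc
      _ = χ := hχ
  have hθχ : θ ≤ χ := by
    by_contra hlt
    push_neg at hlt
    have h1 : χ < 2 ^ χ := Cardinal.cantor χ
    have h2 : (2 : Cardinal) ^ χ ≤ χ ^ χ := Cardinal.power_le_power_right hχ2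
    have h3 : χ ^ χ ≤ χ ^< θ := Cardinal.le_powerlt χ hlt
    rw [hχ] at h3
    exact absurd ((h1.trans_le h2).trans_le h3) (lt_irrefl χ)
  have hpow : ∀ {c : Cardinal}, c < θ → χ ^ c ≤ χ := fun hc =>
    (Cardinal.le_powerlt χ hc).trans_eq hχ
  -- the injection `u : δ.ToType ↪ (χ.ord.ToType → Prop)`
  have hδcard : #δ.ToType ≤ #(χ.ord.ToType → Prop) := by
    rw [Cardinal.mk_toType]
    have h2 : δ.card ≤ 2 ^ χ := Order.lt_succ_iff.mp (Cardinal.lt_ord.mp hδ)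
    have h3 : #(χ.ord.ToType → Prop) = 2 ^ χ := by
      rw [← Cardinal.power_def, Cardinal.mk_Prop, Cardinal.mk_ord_toType]
    rw [h3]; exact h2
  obtain ⟨u⟩ := (Cardinal.le_def _ _).mp hδcard
  -- embeddings of the `A α` into `χ.ord.ToType`
  have heA : ∀ α, Nonempty (A α ↪ χ.ord.ToType) := fun α =>
    (Cardinal.le_def _ _).mp (by rw [Cardinal.mk_ord_toType]; exact hA α)
  have eA : ∀ α, A α ↪ χ.ord.ToType := fun α => (heA α).some
  -- cardinality of the index type
  have hfiber : ∀ b₁ b₂ : θ.ord.ToType,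
      #(((EK7.od θ b₁).ToType → χ.ord.ToType) ×
        ((EK7.od θ b₂).ToType → (((EK7.od θ b₁).ToType → Prop) × χ.ord.ToType))) ≤ χ := by
    intro b₁ b₂
    have hc₁ : #((EK7.od θ b₁).ToType) < θ := by
      rw [Cardinal.mk_toType]; exact EK7.od_lt θ b₁
    have hc₂ : #((EK7.od θ b₂).ToType) < θ := by
      rw [Cardinal.mk_toType]; exact EK7.od_lt θ b₂
    have h1 : #((EK7.od θ b₁).ToType → χ.ord.ToType) ≤ χ := by
      rw [← Cardinal.power_def, Cardinal.mk_ord_toType]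
      exact hpow hc₁
    have hbase : #(((EK7.od θ b₁).ToType → Prop) × χ.ord.ToType) ≤ χ := by
      rw [Cardinal.mk_prod, Cardinal.lift_id, Cardinal.lift_id, ← Cardinal.power_def,
        Cardinal.mk_Prop, Cardinal.mk_ord_toType]
      calc (2 : Cardinal) ^ #((EK7.od θ b₁).ToType) * χ
          ≤ χ * χ :=
            mul_le_mul' ((Cardinal.power_le_power_right hχ2).trans (hpow hc₁)) le_rfl
        _ = χ := Cardinal.mul_eq_self hχinf
    have h2 : #((EK7.od θ b₂).ToType → (((EK7.od θ b₁).ToType → Prop) × χ.ord.ToType)) ≤ χ := by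
      rw [← Cardinal.power_def]
      calc #(((EK7.od θ b₁).ToType → Prop) × χ.ord.ToType) ^ #((EK7.od θ b₂).ToType)
          ≤ χ ^ #((EK7.od θ b₂).ToType) := Cardinal.power_le_power_right hbase
        _ ≤ χ := hpow hc₂
    rw [Cardinal.mk_prod, Cardinal.lift_id, Cardinal.lift_id]
    calc #((EK7.od θ b₁).ToType → χ.ord.ToType) *
        #((EK7.od θ b₂).ToType → (((EK7.od θ b₁).ToType → Prop) × χ.ord.ToType))
        ≤ χ * χ := mul_le_mul' h1 h2
      _ = χ := Cardinal.mul_eq_self hχinf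
  have hT : #(θ.ord.ToType) = θ := Cardinal.mk_ord_toType θ
  have hθμ : θ * χ ≤ χ := by
    calc θ * χ ≤ χ * χ := mul_le_mul' hθχ le_rfl
      _ = χ := Cardinal.mul_eq_self hχinf
  have hIdx : #(EK7.Idx θ χ) ≤ χ := by
    rw [EK7.Idx, Cardinal.mk_sigma]
    calc (Cardinal.sum fun b₁ => #(Σ b₂ : θ.ord.ToType,
            ((EK7.od θ b₁).ToType → χ.ord.ToType) ×
              ((EK7.od θ b₂).ToType → (((EK7.od θ b₁).ToType → Prop) × χ.ord.ToType))))
        ≤ Cardinal.sum (fun _ : θ.ord.ToType => χ) := by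
          apply Cardinal.sum_le_sum
          intro b₁
          rw [Cardinal.mk_sigma]
          calc (Cardinal.sum fun b₂ =>
                #(((EK7.od θ b₁).ToType → χ.ord.ToType) ×
                  ((EK7.od θ b₂).ToType → (((EK7.od θ b₁).ToType → Prop) × χ.ord.ToType))))
              ≤ Cardinal.sum (fun _ : θ.ord.ToType => χ) :=
                Cardinal.sum_le_sum _ _ fun b₂ => hfiber b₁ b₂
            _ = #(θ.ord.ToType) * χ := Cardinal.sum_const' _ _
            _ = θ * χ := by rw [hT]
            _ ≤ χ := hθμ
      _ = #(θ.ord.ToType) * χ := Cardinal.sum_const' _ _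
      _ = θ * χ := by rw [hT]
      _ ≤ χ := hθμ
  haveI hTne : Nonempty θ.ord.ToType := by
    have hlt : (0 : Ordinal) < θ.ord := by
      simpa using Cardinal.ord_lt_ord.mpr hθreg.pos
    exact Ordinal.nonempty_toType_iff.mpr hlt.ne'
  haveI hIne : Nonempty (EK7.Idx θ χ) :=
    ⟨⟨Classical.arbitrary _, Classical.arbitrary _,
      fun _ => Classical.arbitrary _, fun _ => ⟨fun _ => True, Classical.arbitrary _⟩⟩⟩
  obtain ⟨emb⟩ : Nonempty (EK7.Idx θ χ ↪ χ.ord.ToType) :=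
    (Cardinal.le_def _ _).mp (by rw [Cardinal.mk_ord_toType]; exact hIdx)
  refine ⟨fun ε => EK7.H θ χ δ A hne u eA (Function.invFun emb ε), fun E hE x => ?_⟩
  -- build the index for `E`, `x`
  have hEE : #(↥E × ↥E) < θ := by
    rw [Cardinal.mk_prod]
    simpa using Cardinal.mul_lt_of_lt hθreg.aleph0_le hE hE
  set o₁ := (#(↥E × ↥E)).ord with ho₁def
  have ho₁ : o₁ < θ.ord := Cardinal.ord_lt_ord.mpr hEE
  set b₁ : θ.ord.ToType := Ordinal.ToType.mk (o := θ.ord) ⟨o₁, ho₁⟩ with hb₁def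
  have hodb₁ : EK7.od θ b₁ = o₁ := by
    rw [EK7.od, hb₁def, OrderIso.symm_apply_apply]
  obtain ⟨e₁⟩ : Nonempty ((EK7.od θ b₁).ToType ≃ (↥E × ↥E)) := by
    rw [← Cardinal.eq, Cardinal.mk_toType, hodb₁, ho₁def, Cardinal.card_ord]
  set o₂ := (#↥E).ord with ho₂def
  have ho₂ : o₂ < θ.ord := Cardinal.ord_lt_ord.mpr hE
  set b₂ : θ.ord.ToType := Ordinal.ToType.mk (o := θ.ord) ⟨o₂, ho₂⟩ with hb₂def
  have hodb₂ : EK7.od θ b₂ = o₂ := by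
    rw [EK7.od, hb₂def, OrderIso.symm_apply_apply]
  obtain ⟨e₂⟩ : Nonempty ((EK7.od θ b₂).ToType ≃ ↥E) := by
    rw [← Cardinal.eq, Cardinal.mk_toType, hodb₂, ho₂def, Cardinal.card_ord]
  -- separating coordinates
  have hsepex : ∀ p : ↥E × ↥E, ∃ k, p.1 ≠ p.2 → u p.1.1 k ≠ u p.2.1 k := by
    intro p
    by_cases hp : p.1 = p.2
    · exact ⟨Classical.arbitrary _, fun h => absurd hp h⟩
    · have huu : u p.1.1 ≠ u p.2.1 := by
        intro h
        exact hp (Subtype.ext (u.injective h))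
      obtain ⟨k, hk⟩ := Function.ne_iff.mp huu
      exact ⟨k, fun _ => hk⟩
  choose sep hsep using hsepex
  set g : (EK7.od θ b₁).ToType → χ.ord.ToType := fun i => sep (e₁ i) with hgdef
  set r : ↥E → ((EK7.od θ b₁).ToType → Prop) := fun a i => u a.1 (g i) with hrdef
  have hrinj : Function.Injective r := by
    intro a a' hr
    by_contra hne'
    have hk := hsep (a, a') hne'
    have heq : r a (e₁.symm (a, a')) = r a' (e₁.symm (a, a')) := by rw [hr]
    rw [hrdef] at heq
    simp only [hgdef, Equiv.apply_symm_apply] at heq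
    exact hk heq
  set F : (EK7.od θ b₂).ToType → (((EK7.od θ b₁).ToType → Prop) × χ.ord.ToType) :=
    fun j => (r (e₂ j), eA (e₂ j).1 (x (e₂ j))) with hFdef
  set ι : EK7.Idx θ χ := ⟨b₁, b₂, g, F⟩ with hιdef
  refine ⟨emb ι, fun a => ?_⟩
  have hinv : Function.invFun emb (emb ι) = ι := Function.leftInverse_invFun emb.injective ι
  have hrw : EK7.H θ χ δ A hne u eA (Function.invFun emb (emb ι)) a.1
      = EK7.H θ χ δ A hne u eA ι a.1 :=
    congrArg (fun z => EK7.H θ χ δ A hne u eA z a.1) hinv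
  refine hrw.trans ?_
  have hp : ∃ j, (F j).1 = fun i => u a.1 (g i) := by
    refine ⟨e₂.symm a, ?_⟩
    show r (e₂ (e₂.symm a)) = fun i => u a.1 (g i)
    rw [e₂.apply_symm_apply]
  have key : EK7.H θ χ δ A hne u eA ι a.1
      = Function.invFun (eA a.1) ((F hp.choose).2) := by
    show (if hq : ∃ j, (F j).1 = fun i => u a.1 (g i) then
        Function.invFun (eA a.1) ((F hq.choose).2)
      else (hne a.1).some) = _
    rw [dif_pos hp]
  refine key.trans ?_
  have hj₀ : (F hp.choose).1 = fun i => u a.1 (g i) := hp.choose_spec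
  have harg : r (e₂ hp.choose) = r a := hj₀
  have ha : e₂ hp.choose = a := hrinj harg
  have hF2 : Function.invFun (eA a.1) ((F hp.choose).2)
      = Function.invFun (eA a.1) (eA (e₂ hp.choose).1 (x (e₂ hp.choose))) := rfl
  refine hF2.trans ?_
  rw [ha]
  exact Function.leftInverse_invFun (eA _).injective _
end

section
/- Every forcing poset of size < θ is θ-⊏-good: for every P-name ḣ of a real in ω^ω there is a nonempty set Y ⊆ ω^ω in the ground model of size < θ such that for every f ∈ ω^ω that is ⊏-unbounded over Y, P forces f ⊄ ḣ. -/
open Cardinal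

/-- `decide` is an abstract (name for a) real of the forcing poset `P`: `decide p n m`
means that the condition `p` forces the `n`-th value of the name to be `m`.  The decided
values persist to stronger conditions, are unique, and densely many conditions decide each
value. -/
def IsNameForReal (P : Type) [Preorder P] (decide : P → ℕ → ℕ → Prop) : Prop :=
  (∀ p q : P, ∀ n m, q ≤ p → decide p n m → decide q n m) ∧
  (∀ p n m m', decide p n m → decide p n m' → m = m') ∧
  (∀ p n, ∃ q ≤ p, ∃ m, decide q n m)

/-- Every forcing poset of size `< θ` is `θ`-`⊏`-good, where `⊏ = ⋃_n ⊏_n` for an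
increasing sequence `⟨⊏_n⟩` of closed relations on `ω^ω` with nowhere dense vertical
sections: for every name `ḣ` of a real there is a nonempty `Y ⊆ ω^ω` of size `< θ` such
that for every `f` which is `⊏`-unbounded over `Y`, `P` forces `¬ f ⊏ ḣ` (densely many
conditions exclude `f ⊏_n ḣ` for each `n`, in the sense that every real consistent with
the information decided by such a condition fails `f ⊏_n ·`). -/
theorem stmt_9 (θ : Cardinal) (hθreg : θ.IsRegular) (hθunc : ℵ₀ < θ)
    (R : ℕ → (ℕ → ℕ) → (ℕ → ℕ) → Prop)
    (hRmono : ∀ n n', n ≤ n' → ∀ f g, R n f g → R n' f g)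
    (hRclosed : ∀ n, IsClosed {x : (ℕ → ℕ) × (ℕ → ℕ) | R n x.1 x.2})
    (hRnwd : ∀ n g, IsNowhereDense {f : ℕ → ℕ | R n f g})
    (P : Type) [Preorder P] (hP : #P < θ)
    (decide : P → ℕ → ℕ → Prop) (hname : IsNameForReal P decide) :
    ∃ Y : Set (ℕ → ℕ), Y.Nonempty ∧ #Y < θ ∧
      ∀ f : ℕ → ℕ, (∀ g ∈ Y, ¬ ∃ n, R n f g) →
        ∀ p : P, ∀ n : ℕ, ∃ q ≤ p,
          ∀ g : ℕ → ℕ, (∀ n' m, decide q n' m → g n' = m) → ¬ R n f g := by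
  classical
  obtain ⟨hpersist, huniq, hdense⟩ := hname
  choose nxt hle val hval using hdense
  -- a descending chain below `p` deciding each coordinate, and the decided real
  set chain : P → ℕ → P := fun p k =>
    Nat.rec (nxt p 0) (fun j q => nxt q (j + 1)) k with hchain
  set gr : P → ℕ → ℕ := fun p k =>
    Nat.casesOn k (val p 0) (fun j => val (chain p j) (j + 1)) with hgr
  have hdec : ∀ p k, decide (chain p k) k (gr p k) := by
    intro p k
    cases k with
    | zero => exact hval p 0
    | succ j => exact hval (chain p j) (j + 1)
  have hanti : ∀ p, Antitone (chain p) := by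
    intro p
    apply antitone_nat_of_succ_le
    intro k
    exact hle (chain p k) (k + 1)
  have hchainp : ∀ p k, chain p k ≤ p := by
    intro p k
    exact (hanti p (Nat.zero_le k)).trans (hle p 0)
  refine ⟨insert (fun _ => 0) (Set.range gr), ⟨_, Set.mem_insert _ _⟩, ?_, ?_⟩
  · calc #(insert (fun _ => 0) (Set.range gr) : Set (ℕ → ℕ))
        ≤ #(Set.range gr) + 1 := Cardinal.mk_insert_le
      _ < θ := by
          apply Cardinal.add_lt_of_lt hθreg.aleph0_le
          · exact Cardinal.mk_range_le.trans_lt hP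
          · exact lt_of_lt_of_le Cardinal.one_lt_aleph0 hθunc.le
  · intro f hf p n
    by_contra hcon
    push_neg at hcon
    have hstep : ∀ q, q ≤ p → ∃ g, (∀ n' m, decide q n' m → g n' = m) ∧ R n f g := by
      intro q hq
      obtain ⟨g, hg1, hg2⟩ := hcon q hq
      exact ⟨g, hg1, hg2⟩
    choose G hGcons hGR using fun k => hstep (chain p k) (hchainp p k)
    -- the witnesses converge to `gr p`
    have htend : Filter.Tendsto (fun k => (f, G k)) Filter.atTop (nhds (f, gr p)) := by
      refine Filter.Tendsto.prodMk_nhds tendsto_const_nhds ?_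
      rw [tendsto_pi_nhds]
      intro j
      apply Filter.Tendsto.congr' _ tendsto_const_nhds
      filter_upwards [Filter.eventually_ge_atTop j] with k hk
      exact (hGcons k j (gr p j) (hpersist (chain p j) (chain p k) j (gr p j)
        (hanti p hk) (hdec p j))).symm
    have hmem : (f, gr p) ∈ {x : (ℕ → ℕ) × (ℕ → ℕ) | R n x.1 x.2} :=
      (hRclosed n).mem_of_tendsto htend (Filter.Eventually.of_forall fun k => hGR k)
    exact hf (gr p) (Set.mem_insert_of_mem _ ⟨p, rfl⟩) ⟨n, hmem⟩
end

section
/- cov(N) ≤ b_⋔ and d_⋔ ≤ non(N), where ⋔ is the relation on 2^ω defined by f ⋔ g iff f↾I_k ≠ g↾I_k for all but finitely many k, with |I_k| = 2^{k+1}. -/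
open Filter MeasureTheory Cardinal

/-- The interval partition `⟨I_k⟩` of `ω` with `|I_k| = 2^{k+1}`:
`I_k = [2^{k+1} - 2, 2^{k+2} - 2)`. -/
def Ipart (k : ℕ) : Set ℕ := Set.Ico (2 ^ (k + 1) - 2) (2 ^ (k + 2) - 2)

/-- `f ⋔ g` iff `f↾I_k ≠ g↾I_k` for all but finitely many `k`. -/
def pitchfork (f g : ℕ → Bool) : Prop :=
  ∀ᶠ k in atTop, ∃ i ∈ Ipart k, f i ≠ g i

/-- `cov(N)`: the least number of `μ`-null sets covering `2^ω`. -/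
noncomputable def covNull (μ : Measure (ℕ → Bool)) : Cardinal :=
  sInf {c | ∃ S : Set (Set (ℕ → Bool)), (∀ A ∈ S, μ A = 0) ∧
    ⋃₀ S = Set.univ ∧ #S = c}

/-- `non(N)`: the least size of a non-`μ`-null subset of `2^ω`. -/
noncomputable def nonNull (μ : Measure (ℕ → Bool)) : Cardinal :=
  sInf {c | ∃ A : Set (ℕ → Bool), μ A ≠ 0 ∧ #A = c}

/-- `b_⋔`: the least size of a `⋔`-unbounded family. -/
noncomputable def bPitchfork : Cardinal :=
  sInf {c | ∃ F : Set (ℕ → Bool), (¬ ∃ g, ∀ f ∈ F, pitchfork f g) ∧ #F = c}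

/-- `d_⋔`: the least size of a `⋔`-dominating family. -/
noncomputable def dPitchfork : Cardinal :=
  sInf {c | ∃ C : Set (ℕ → Bool), (∀ f, ∃ g ∈ C, pitchfork f g) ∧ #C = c}


lemma null_nonpitch (μ : Measure (ℕ → Bool))
    (hμ : ∀ (s : Finset ℕ) (b : ℕ → Bool),
      μ {f | ∀ i ∈ s, f i = b i} = (2 : ENNReal)⁻¹ ^ s.card) (f : ℕ → Bool) :
    μ {g | ¬ pitchfork f g} = 0 := by
  set s : ℕ → Set (ℕ → Bool) := fun k => {g | ∀ i ∈ Finset.Ico (2 ^ (k + 1) - 2) (2 ^ (k + 2) - 2), g i = f i} with hs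
  have hcard : ∀ k, (Finset.Ico (2 ^ (k + 1) - 2) (2 ^ (k + 2) - 2)).card = 2 ^ (k + 1) := by
    intro k
    rw [Nat.card_Ico]
    have h1 : 2 ≤ 2 ^ (k + 1) := Nat.one_lt_two_pow (by omega)
    have h2 : 2 ^ (k + 2) = 2 * 2 ^ (k + 1) := by ring
    omega
  have hmeas : ∀ k, μ (s k) = (2 : ENNReal)⁻¹ ^ (2 ^ (k + 1)) := by
    intro k; rw [hs]; rw [hμ, hcard]
  have htsum : ∑' k, μ (s k) ≠ ⊤ := by
    have hle : ∀ k, μ (s k) ≤ (2 : ENNReal)⁻¹ ^ k := by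
      intro k
      rw [hmeas]
      exact pow_le_pow_of_le_one (zero_le (a := (2 : ENNReal)⁻¹)) (by simp)
        (le_of_lt (Nat.lt_of_lt_of_le (Nat.lt_two_pow_self (n := k)) (Nat.pow_le_pow_right (by norm_num) (by omega))))
    refine ne_top_of_le_ne_top ?_ (ENNReal.tsum_le_tsum hle)
    rw [ENNReal.tsum_geometric]
    simp
  have hsub : {g | ¬ pitchfork f g} ⊆ Filter.limsup s atTop := by
    intro g hg
    rw [mem_limsup_iff_frequently_mem]
    rw [Set.mem_setOf_eq, pitchfork, not_eventually] at hg
    refine hg.mono fun k hk => ?_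
    intro i hi
    simp only [Finset.mem_Ico] at hi
    by_contra hne
    exact hk ⟨i, ⟨hi.1, hi.2⟩, fun h => hne h.symm⟩
  exact measure_mono_null hsub (measure_limsup_atTop_eq_zero htsum)

/-- `cov(N) ≤ b_⋔` and `d_⋔ ≤ non(N)`, for the fair-coin product measure on `2^ω`. -/
theorem stmt_11 (μ : Measure (ℕ → Bool)) [IsProbabilityMeasure μ]
    (hμ : ∀ (s : Finset ℕ) (b : ℕ → Bool),
      μ {f | ∀ i ∈ s, f i = b i} = (2 : ENNReal)⁻¹ ^ s.card) :
    covNull μ ≤ bPitchfork ∧ dPitchfork ≤ nonNull μ := by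
  have hnull := null_nonpitch μ hμ
  constructor
  · refine le_csInf ?_ ?_
    · refine ⟨#(Set.univ : Set (ℕ → Bool)), Set.univ, fun ⟨g, hg⟩ => ?_, rfl⟩
      obtain ⟨k, i, _, hne⟩ := (hg g (Set.mem_univ g)).exists
      exact hne rfl
    · rintro c ⟨F, hF, rfl⟩
      refine le_trans (csInf_le' ?_) (mk_image_le (f := fun f => {g | ¬ pitchfork f g}))
      refine ⟨(fun f => {g | ¬ pitchfork f g}) '' F, ?_, ?_, rfl⟩
      · rintro A ⟨f, _, rfl⟩; exact hnull f
      · ext g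
        simp only [Set.mem_sUnion, Set.mem_univ, iff_true]
        push_neg at hF
        obtain ⟨f, hfF, hfg⟩ := hF g
        exact ⟨_, ⟨f, hfF, rfl⟩, hfg⟩
  · refine le_csInf ⟨#(Set.univ : Set (ℕ → Bool)), Set.univ, by simp, rfl⟩ ?_
    rintro c ⟨A, hA, rfl⟩
    refine csInf_le' ⟨A, fun f => ?_, rfl⟩
    by_contra h
    push_neg at h
    exact hA (measure_mono_null (fun g hg => h g hg) (hnull f))
end

section
/- add(M) = min(b, cov(M)), where b is the unbounding number, cov(M) the covering number of the meager ideal, and add(M) the additivity of the meager ideal. -/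
open Filter Cardinal

/-- `add(M)`: the least size of a family of meager subsets of Baire space `ω^ω` whose
union is not meager. -/
noncomputable def addMeager : Cardinal :=
  sInf {c | ∃ S : Set (Set (ℕ → ℕ)), (∀ A ∈ S, IsMeagre A) ∧
    ¬ IsMeagre (⋃₀ S) ∧ #S = c}

/-- `cov(M)`: the least number of meager sets covering Baire space. -/
noncomputable def covMeager : Cardinal :=
  sInf {c | ∃ S : Set (Set (ℕ → ℕ)), (∀ A ∈ S, IsMeagre A) ∧
    ⋃₀ S = Set.univ ∧ #S = c}

/-- `b`: the least size of a `≤*`-unbounded family in `ω^ω`. -/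
noncomputable def bNumber : Cardinal :=
  sInf {c | ∃ F : Set (ℕ → ℕ),
    (¬ ∃ g : ℕ → ℕ, ∀ f ∈ F, ∀ᶠ n in atTop, f n ≤ g n) ∧ #F = c}

set_option maxHeartbeats 1000000 in
section
set_option linter.unusedSectionVars false
set_option linter.unnecessarySimpa false

namespace MT

/-- `s` is a (finite) prefix of `g : ℕ → ℕ`. -/
def Pfx (s : List ℕ) (g : ℕ → ℕ) : Prop := ∀ i : ℕ, ∀ h : i < s.length, g i = s[i]

/-- Basic cylinder set. -/
def Cyl (s : List ℕ) : Set (ℕ → ℕ) := {g | Pfx s g}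

theorem pfx_of_prefix {s t : List ℕ} {g : ℕ → ℕ} (hst : s <+: t) (h : Pfx t g) : Pfx s g := by
  obtain ⟨r, rfl⟩ := hst
  intro i hi
  rw [h i (by simp; omega), List.getElem_append_left hi]

/-- the canonical point extending a stem. -/
def ext0 (s : List ℕ) : ℕ → ℕ := fun i => s.getD i 0

theorem pfx_ext0 (s : List ℕ) : Pfx s (ext0 s) := by
  intro i hi
  simp only [ext0]
  rw [List.getD_eq_getElem _ _ hi]

theorem cyl_nonempty (s : List ℕ) : (Cyl s).Nonempty := ⟨ext0 s, pfx_ext0 s⟩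

theorem isOpen_cyl (s : List ℕ) : IsOpen (Cyl s) := by
  have : Cyl s = ⋂ i : Fin s.length, {g : ℕ → ℕ | g i = s[(i:ℕ)]} := by
    ext g
    simp only [Cyl, Set.mem_iInter, Set.mem_setOf_eq]
    constructor
    · intro h i; exact h i i.2
    · intro h i hi; exact h ⟨i, hi⟩
  rw [this]
  refine isOpen_iInter_of_finite fun i => ?_
  have : {g : ℕ → ℕ | g i = s[(i:ℕ)]} = (fun g : ℕ → ℕ => g (i:ℕ)) ⁻¹' {s[(i:ℕ)]} := rfl
  rw [this]
  exact (continuous_apply (i : ℕ)).isOpen_preimage _ (isOpen_discrete _)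

/-- initial segment of `g` of length `n`. -/
def init (g : ℕ → ℕ) (n : ℕ) : List ℕ := List.ofFn (fun i : Fin n => g i)

@[simp] theorem init_length (g : ℕ → ℕ) (n : ℕ) : (init g n).length = n := by
  simp [init]

theorem init_getElem (g : ℕ → ℕ) (n : ℕ) {i : ℕ} (h : i < (init g n).length) :
    (init g n)[i] = g i := by
  simp [init] at h ⊢

theorem pfx_init (g : ℕ → ℕ) (n : ℕ) : Pfx (init g n) g := by
  intro i hi; rw [init_getElem g n hi]

theorem init_prefix {g : ℕ → ℕ} {n m : ℕ} (h : n ≤ m) : init g n <+: init g m := by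
  rw [List.prefix_iff_eq_take]
  apply List.ext_getElem (by simp [init]; omega)
  intro i h1 h2
  rw [List.getElem_take]
  rw [init_getElem, init_getElem]

theorem pfx_init_eq {s : List ℕ} {g : ℕ → ℕ} (h : Pfx s g) : init g s.length = s := by
  apply List.ext_getElem (by simp)
  intro i h1 h2
  rw [init_getElem, h i h2]

/-- cylinders are a neighborhood basis -/
theorem cylinder_basis {U : Set (ℕ → ℕ)} {g : ℕ → ℕ} (hU : IsOpen U) (hg : g ∈ U) :
    ∃ n, Cyl (init g n) ⊆ U := by
  have h1 : U ∈ nhds g := hU.mem_nhds hg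
  rw [nhds_pi, Filter.mem_pi] at h1
  obtain ⟨I, hIfin, t, ht, hsub⟩ := h1
  obtain ⟨n, hn⟩ : ∃ n, ∀ i ∈ I, i < n := by
    rcases I.eq_empty_or_nonempty with h | h
    · exact ⟨0, by simp [h]⟩
    · obtain ⟨m, hm⟩ := hIfin.bddAbove
      exact ⟨m + 1, fun i hi => Nat.lt_succ_of_le (hm hi)⟩
  refine ⟨n, fun y hy => hsub fun i hi => ?_⟩
  have : y i = g i := by
    have := hy i (by simp [init]; exact hn i hi)
    rwa [init_getElem] at this
  rw [this]
  have := ht i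
  rw [nhds_discrete] at this
  exact this



theorem pfx_def : ∀ (s : List ℕ) (g : ℕ → ℕ),
    Pfx s g ↔ ∀ i : ℕ, ∀ h : i < s.length, g i = s[i] := fun _ _ => Iff.rfl

theorem cyl_def : ∀ s, Cyl s = {g : ℕ → ℕ | Pfx s g} := fun _ => rfl

/-- strict extension property -/
def Ext (Φ : List ℕ → List ℕ) : Prop := ∀ s, s <+: Φ s ∧ s.length < (Φ s).length

/-- `g` matches `Φ` at arbitrarily long prefixes. -/
def MatchP (Φ : List ℕ → List ℕ) (g : ℕ → ℕ) : Prop :=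
  ∀ N, ∃ s, Pfx s g ∧ N ≤ s.length ∧ Pfx (Φ s) g

theorem nwd_meagre {F : Set (ℕ → ℕ)} (h : IsNowhereDense F) : IsMeagre F :=
  isMeagre_iff_countable_union_isNowhereDense.2
    ⟨{F}, by simpa using h, Set.countable_singleton F, by simp⟩

theorem exists_extension_nwd {F : Set (ℕ → ℕ)} (hF : IsNowhereDense F) (s : List ℕ) :
    ∃ t, s <+: t ∧ s.length < t.length ∧ ∀ g, Pfx t g → g ∉ F := by
  have hdense : Dense (closure F)ᶜ := interior_eq_empty_iff_dense_compl.1 hF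
  obtain ⟨g, hg1, hg2⟩ := hdense.exists_mem_open (isOpen_cyl s) (cyl_nonempty s)
  obtain ⟨n, hn⟩ := cylinder_basis (isOpen_compl_iff.2 isClosed_closure) hg1
  have hpg : Pfx s g := by rw [cyl_def] at hg2; exact hg2
  refine ⟨init g (max n (s.length + 1)), ?_, ?_, ?_⟩
  · have h := init_prefix (g := g) (n := s.length) (m := max n (s.length + 1)) (by omega)
    rwa [pfx_init_eq hpg] at h
  · rw [init_length]; omega
  · intro y hy hyF
    have : y ∈ Cyl (init g n) := by
      rw [cyl_def]; exact pfx_of_prefix (init_prefix (le_max_left _ _)) hy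
    exact (hn this) (subset_closure hyF)

/-- iterated composition Φ_0 (Φ_1 (... Φ_n s)) -/
def chain (Φ : ℕ → List ℕ → List ℕ) : ℕ → List ℕ → List ℕ
  | 0, s => Φ 0 s
  | (n+1), s => chain Φ n (Φ (n+1) s)

theorem chain_ext {Φ : ℕ → List ℕ → List ℕ} (hΦ : ∀ n, Ext (Φ n)) :
    ∀ n s, s <+: chain Φ n s ∧ s.length < (chain Φ n s).length := by
  intro n
  induction n with
  | zero => intro s; exact (hΦ 0 s)
  | succ n ih =>
    intro s
    have h1 := (hΦ (n+1)) s
    have h2 := ih (Φ (n+1) s)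
    refine ⟨h1.1.trans h2.1, ?_⟩
    show s.length < (chain Φ n (Φ (n+1) s)).length
    omega

theorem chain_hits {Φ : ℕ → List ℕ → List ℕ} (hΦ : ∀ n, Ext (Φ n)) :
    ∀ n s k, k ≤ n →
      ∃ c, s.length ≤ c.length ∧ c <+: chain Φ n s ∧ Φ k c <+: chain Φ n s := by
  intro n
  induction n with
  | zero =>
    intro s k hk
    interval_cases k
    exact ⟨s, le_refl _, (hΦ 0 s).1, List.prefix_refl _⟩
  | succ n ih =>
    intro s k hk
    rcases Nat.lt_or_ge k (n+1) with h | h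
    · obtain ⟨c, hc1, hc2, hc3⟩ := ih (Φ (n+1) s) k (by omega)
      exact ⟨c, le_trans (le_of_lt (hΦ (n+1) s).2) hc1, hc2, hc3⟩
    · have hk : k = n + 1 := by omega
      subst hk
      exact ⟨s, le_refl _, (hΦ (n+1) s).1.trans (chain_ext hΦ n _).1,
        (chain_ext hΦ n (Φ (n+1) s)).1⟩

/-- Every meagre set admits a "master" extension function: any function matching it at
arbitrarily long prefixes avoids the set. -/
theorem exists_master {A : Set (ℕ → ℕ)} (hA : IsMeagre A) :
    ∃ Φ, Ext Φ ∧ ∀ g, MatchP Φ g → g ∉ A := by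
  obtain ⟨T, hT1, hT2, hT3⟩ := isMeagre_iff_countable_union_isNowhereDense.1 hA
  -- get an ℕ-indexed family of nwd sets covering A
  obtain ⟨f, hf1, hf2⟩ : ∃ f : ℕ → Set (ℕ → ℕ), (∀ n, IsNowhereDense (f n)) ∧ A ⊆ ⋃ n, f n := by
    rcases T.eq_empty_or_nonempty with h | h
    · refine ⟨fun _ => ∅, fun _ => isNowhereDense_empty, ?_⟩
      subst h; simpa using hT3
    · obtain ⟨f, rfl⟩ := hT2.exists_eq_range h
      refine ⟨f, fun n => hT1 _ ⟨n, rfl⟩, hT3.trans ?_⟩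
      rw [Set.sUnion_range]
  -- choose extension functions for each nwd set
  have h1 : ∀ n s, ∃ t, s <+: t ∧ s.length < t.length ∧ ∀ g, Pfx t g → g ∉ f n :=
    fun n s => exists_extension_nwd (hf1 n) s
  choose Φ hΦ1 hΦ2 hΦ3 using h1
  have hExt : ∀ n, Ext (Φ n) := fun n s => ⟨hΦ1 n s, hΦ2 n s⟩
  refine ⟨fun s => chain Φ s.length s, fun s => chain_ext hExt s.length s, ?_⟩
  intro g hg hgA
  obtain ⟨n, hn⟩ := Set.mem_iUnion.1 (hf2 hgA)
  obtain ⟨s, hs1, hs2, hs3⟩ := hg n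
  obtain ⟨c, hc1, hc2, hc3⟩ := chain_hits hExt s.length s n hs2
  exact hΦ3 n c g (pfx_of_prefix hc3 hs3) hn


-- encoding of stems
noncomputable def code (s : List ℕ) : ℕ := Encodable.encode s
noncomputable def dec (n : ℕ) : List ℕ := Denumerable.ofNat (List ℕ) n

@[simp] theorem dec_code (s : List ℕ) : dec (code s) = s := Denumerable.ofNat_encode s

theorem code_injective : Function.Injective code := fun s t h => by
  have := congrArg dec h; simpa using this

def padL (r : List ℕ) : List ℕ := if r = [] then [0] else r

theorem padL_ne_nil (r : List ℕ) : padL r ≠ [] := by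
  unfold padL; split <;> simp_all

noncomputable def Dm (s : List ℕ) (m : ℕ) : List ℕ := s ++ padL (dec m)

theorem Dm_ext (s : List ℕ) (m : ℕ) : s <+: Dm s m ∧ s.length < (Dm s m).length := by
  constructor
  · exact List.prefix_append _ _
  · unfold Dm
    have := padL_ne_nil (dec m)
    have : (padL (dec m)).length ≠ 0 := fun h => this (List.eq_nil_of_length_eq_zero h)
    simp; omega

/-- code of `t` as an extension of its strict prefix `s` -/
noncomputable def codeOf (s t : List ℕ) : ℕ := code (t.drop s.length)

theorem Dm_codeOf {s t : List ℕ} (h1 : s <+: t) (h2 : s.length < t.length) :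
    Dm s (codeOf s t) = t := by
  obtain ⟨r, rfl⟩ := h1
  have hr : r ≠ [] := by
    intro h; subst h; simp at h2
  unfold Dm codeOf
  rw [List.drop_left, dec_code]
  unfold padL
  simp [hr]

/-- The master step function associated to a parameter `w`. -/
noncomputable def Ψ (w : ℕ → ℕ) (s : List ℕ) : List ℕ := Dm s (w (code s))

theorem Ψ_ext (w : ℕ → ℕ) : Ext (Ψ w) := fun s => Dm_ext s (w (code s))

/-- orbit of a stem under `Ψ w` -/
noncomputable def orb (w : ℕ → ℕ) (u : List ℕ) (i : ℕ) : List ℕ := (Ψ w)^[i] u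

@[simp] theorem orb_zero (w : ℕ → ℕ) (u : List ℕ) : orb w u 0 = u := rfl

theorem orb_succ (w : ℕ → ℕ) (u : List ℕ) (i : ℕ) : orb w u (i+1) = Ψ w (orb w u i) := by
  unfold orb; rw [Function.iterate_succ_apply']

theorem orb_length_lt (w : ℕ → ℕ) (u : List ℕ) (i : ℕ) :
    (orb w u i).length < (orb w u (i+1)).length := by
  rw [orb_succ]; exact (Ψ_ext w _).2

theorem orb_length_mono (w : ℕ → ℕ) (u : List ℕ) {i j : ℕ} (h : i < j) :
    (orb w u i).length < (orb w u j).length := by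
  induction j with
  | zero => omega
  | succ j ih =>
    rcases Nat.lt_or_ge i j with h' | h'
    · exact lt_trans (ih h') (orb_length_lt w u j)
    · have : i = j := by omega
      subst this; exact orb_length_lt w u i

theorem orb_prefix (w : ℕ → ℕ) (u : List ℕ) {i j : ℕ} (h : i ≤ j) :
    orb w u i <+: orb w u j := by
  induction j with
  | zero =>
    have : i = 0 := by omega
    subst this; exact List.prefix_refl _
  | succ j ih =>
    rcases Nat.lt_or_ge i (j+1) with h' | h'
    · have := ih (by omega)
      refine this.trans ?_
      rw [orb_succ]; exact (Ψ_ext w _).1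
    · have : i = j + 1 := by omega
      subst this; exact List.prefix_refl _

theorem orb_injective (w : ℕ → ℕ) (u : List ℕ) : Function.Injective (orb w u) := by
  intro i j h
  by_contra hne
  rcases Nat.lt_or_ge i j with h' | h'
  · have := orb_length_mono w u h'; rw [h] at this; omega
  · have hj : j < i := by omega
    have := orb_length_mono w u hj; rw [h] at this; omega

/-- orbit only depends on the coordinates of `w` along earlier orbit stems -/
theorem orb_congr {w w' : ℕ → ℕ} {u : List ℕ} {k : ℕ}
    (h : ∀ j < k, w' (code (orb w u j)) = w (code (orb w u j))) :
    orb w' u k = orb w u k := by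
  induction k with
  | zero => rfl
  | succ k ih =>
    have hk : orb w' u k = orb w u k := ih (fun j hj => h j (by omega))
    rw [orb_succ, orb_succ, hk]
    unfold Ψ
    rw [h k (by omega)]

/-- the set of parameters whose orbit from `u` makes a `Φ`-move at some step -/
def Hits (Φ : List ℕ → List ℕ) (u : List ℕ) : Set (ℕ → ℕ) :=
  {w | ∃ i, Ψ w (orb w u i) = Φ (orb w u i)}

theorem isOpen_hits (Φ : List ℕ → List ℕ) (u : List ℕ) : IsOpen (Hits Φ u) := by
  rw [isOpen_iff_mem_nhds]
  intro w hw
  obtain ⟨i, hi⟩ := hw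
  set V : Set (ℕ → ℕ) :=
    ⋂ j : Fin (i+1), {w' : ℕ → ℕ | w' (code (orb w u j)) = w (code (orb w u j))} with hV
  have hVopen : IsOpen V := by
    refine isOpen_iInter_of_finite fun j => ?_
    have : {w' : ℕ → ℕ | w' (code (orb w u j)) = w (code (orb w u j))} =
        (fun w' : ℕ → ℕ => w' (code (orb w u (j : ℕ)))) ⁻¹' {w (code (orb w u (j : ℕ)))} := rfl
    rw [this]
    exact (continuous_apply _).isOpen_preimage _ (isOpen_discrete _)
  have hwV : w ∈ V := by
    rw [hV]; exact Set.mem_iInter.2 fun j => rfl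
  refine Filter.mem_of_superset (hVopen.mem_nhds hwV) ?_
  intro w' hw'
  have hcoord : ∀ j < i + 1, w' (code (orb w u j)) = w (code (orb w u j)) := by
    intro j hj
    exact Set.mem_iInter.1 hw' ⟨j, hj⟩
  have horb : orb w' u i = orb w u i := orb_congr (fun j hj => hcoord j (by omega))
  refine ⟨i, ?_⟩
  rw [horb]
  unfold Ψ
  rw [hcoord i (by omega)]
  exact hi

theorem dense_hits {Φ : List ℕ → List ℕ} (hΦ : Ext Φ) (u : List ℕ) : Dense (Hits Φ u) := by
  rw [dense_iff_inter_open]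
  rintro U hU ⟨w₀, hw₀⟩
  obtain ⟨n, hn⟩ := cylinder_basis hU hw₀
  -- find an orbit step whose code is ≥ n
  have hexists : ∃ j, n ≤ code (orb w₀ u j) := by
    by_contra hc
    push_neg at hc
    -- n+1 distinct codes all < n : pigeonhole
    have hinj : Function.Injective (fun j : Fin (n+1) => code (orb w₀ u j)) := by
      intro a b hab
      have := code_injective hab
      have := orb_injective w₀ u this
      exact Fin.ext (by exact_mod_cast this)
    have : (n : ℕ) + 1 ≤ n := by
      have hcard := Fintype.card_le_of_injective
        (fun j : Fin (n+1) => (⟨code (orb w₀ u j), hc j⟩ : Fin n))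
        (fun a b hab => hinj (by simpa using congrArg Fin.val hab))
      simpa using hcard
    omega
  classical
  set j₀ := Nat.find hexists with hj₀
  have hj₀spec : n ≤ code (orb w₀ u j₀) := Nat.find_spec hexists
  have hj₀min : ∀ j < j₀, code (orb w₀ u j) < n := by
    intro j hj
    have := Nat.find_min hexists hj
    omega
  set σ := orb w₀ u j₀ with hσ
  set w' := Function.update w₀ (code σ) (codeOf σ (Φ σ)) with hw'
  have hagree : ∀ j < j₀, w' (code (orb w₀ u j)) = w₀ (code (orb w₀ u j)) := by
    intro j hj
    apply Function.update_of_ne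
    intro hcontra
    have := code_injective hcontra
    have := orb_injective w₀ u this
    omega
  have horb : orb w' u j₀ = orb w₀ u j₀ := orb_congr hagree
  refine ⟨w', ?_, ?_⟩
  · apply hn
    rw [cyl_def]
    show Pfx (init w₀ n) w'
    rw [pfx_def]
    intro i hi
    rw [init_length] at hi
    have h1 : w' i = w₀ i := by
      apply Function.update_of_ne
      omega
    rw [h1]
    have := (pfx_def _ _).1 (pfx_init w₀ n) i (by rw [init_length]; exact hi)
    exact this
  · refine ⟨j₀, ?_⟩
    rw [horb, ← hσ]
    unfold Ψ
    rw [hw', Function.update_self]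
    exact Dm_codeOf (hΦ σ).1 (hΦ σ).2

/-- the meagre set of "bad" parameters for an extension function `Φ` -/
def BadP (Φ : List ℕ → List ℕ) : Set (ℕ → ℕ) := ⋃ u : List ℕ, (Hits Φ u)ᶜ

theorem meagre_badP {Φ : List ℕ → List ℕ} (hΦ : Ext Φ) : IsMeagre (BadP Φ) := by
  have : BadP Φ = ⋃ n : ℕ, (Hits Φ (dec n))ᶜ := by
    unfold BadP
    apply Set.Subset.antisymm
    · intro w hw
      obtain ⟨U, ⟨u, rfl⟩, hU⟩ := hw
      exact Set.mem_iUnion.2 ⟨code u, by rwa [dec_code]⟩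
    · intro w hw
      obtain ⟨n, hn⟩ := Set.mem_iUnion.1 hw
      exact Set.mem_iUnion.2 ⟨dec n, hn⟩
  rw [this]
  apply isMeagre_iUnion
  intro n
  apply nwd_meagre
  rw [IsClosed.isNowhereDense_iff (isOpen_hits Φ (dec n)).isClosed_compl]
  rw [interior_compl, (dense_hits hΦ (dec n)).closure_eq, Set.compl_univ]


/-- the whole space is not meagre -/
theorem not_meagre_univ : ¬ IsMeagre (Set.univ : Set (ℕ → ℕ)) := by
  intro h
  rw [IsMeagre, Set.compl_univ] at h
  have := dense_of_mem_residual h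
  have h2 := this.nonempty
  simp at h2

theorem not_meagre_of_sUnion_univ {S : Set (Set (ℕ → ℕ))} (h : ⋃₀ S = Set.univ) :
    ¬ IsMeagre (⋃₀ S) := by
  rw [h]; exact not_meagre_univ

/-- singletons are nowhere dense -/
theorem singleton_nwd (x : ℕ → ℕ) : IsNowhereDense ({x} : Set (ℕ → ℕ)) := by
  rw [IsClosed.isNowhereDense_iff isClosed_singleton]
  by_contra h
  obtain ⟨g, hg⟩ := Set.eq_empty_or_nonempty (interior ({x} : Set (ℕ → ℕ))) |>.resolve_left h
  obtain ⟨n, hn⟩ := cylinder_basis isOpen_interior hg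
  set y : ℕ → ℕ := fun i => if i < n then g i else 1 with hy
  set z : ℕ → ℕ := fun i => if i < n then g i else 2 with hz
  have hpy : Pfx (init g n) y := by
    rw [pfx_def]; intro i hi
    rw [init_length] at hi
    have := (pfx_def _ _).1 (pfx_init g n) i (by rw [init_length]; exact hi)
    rw [← this]; simp [hy, hi]
  have hpz : Pfx (init g n) z := by
    rw [pfx_def]; intro i hi
    rw [init_length] at hi
    have := (pfx_def _ _).1 (pfx_init g n) i (by rw [init_length]; exact hi)
    rw [← this]; simp [hz, hi]
  have h1 : y ∈ ({x} : Set (ℕ → ℕ)) := interior_subset (hn (by rw [cyl_def]; exact hpy))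
  have h2 : z ∈ ({x} : Set (ℕ → ℕ)) := interior_subset (hn (by rw [cyl_def]; exact hpz))
  simp only [Set.mem_singleton_iff] at h1 h2
  have : y n = z n := by rw [h1, h2]
  simp [hy, hz] at this

/-- the family of all singletons witnesses membership in both defining sets -/
theorem add_set_nonempty :
    {c | ∃ S : Set (Set (ℕ → ℕ)), (∀ A ∈ S, IsMeagre A) ∧
      ¬ IsMeagre (⋃₀ S) ∧ #S = c}.Nonempty := by
  refine ⟨_, Set.range (fun x : ℕ → ℕ => ({x} : Set (ℕ → ℕ))), ?_, ?_, rfl⟩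
  · rintro A ⟨x, rfl⟩; exact nwd_meagre (singleton_nwd x)
  · have : ⋃₀ Set.range (fun x : ℕ → ℕ => ({x} : Set (ℕ → ℕ))) = Set.univ := by
      rw [Set.sUnion_range]; ext g; simp
    rw [this]; exact not_meagre_univ

theorem cov_set_nonempty :
    {c | ∃ S : Set (Set (ℕ → ℕ)), (∀ A ∈ S, IsMeagre A) ∧
      ⋃₀ S = Set.univ ∧ #S = c}.Nonempty := by
  refine ⟨_, Set.range (fun x : ℕ → ℕ => ({x} : Set (ℕ → ℕ))), ?_, ?_, rfl⟩
  · rintro A ⟨x, rfl⟩; exact nwd_meagre (singleton_nwd x)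
  · rw [Set.sUnion_range]; ext g; simp

theorem b_set_nonempty :
    {c | ∃ F : Set (ℕ → ℕ),
      (¬ ∃ g : ℕ → ℕ, ∀ f ∈ F, ∀ᶠ n in atTop, f n ≤ g n) ∧ #F = c}.Nonempty := by
  refine ⟨_, Set.univ, ?_, rfl⟩
  rintro ⟨g, hg⟩
  have := hg (fun n => g n + 1) (Set.mem_univ _)
  rw [eventually_atTop] at this
  obtain ⟨N, hN⟩ := this
  have := hN N (le_refl N)
  simp at this

/-- If a family of functions is smaller than `bNumber`, it is bounded. -/
theorem bounded_of_lt_b {G : Set (ℕ → ℕ)} (h : #G < bNumber) :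
    ∃ R : ℕ → ℕ, ∀ f ∈ G, ∀ᶠ n in atTop, f n ≤ R n := by
  by_contra hc
  push_neg at hc
  have : bNumber ≤ #G := by
    show sInf _ ≤ #G
    exact csInf_le (OrderBot.bddBelow _) ⟨G, by push_neg; exact hc, rfl⟩
  exact absurd h (not_lt.2 this)

/-- If a family of meagre sets is smaller than `covMeager`, some point escapes all of them. -/
theorem escape_of_lt_cov {T : Set (Set (ℕ → ℕ))} (hm : ∀ A ∈ T, IsMeagre A)
    (h : #T < covMeager) : ∃ w : ℕ → ℕ, ∀ A ∈ T, w ∉ A := by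
  by_contra hc
  push_neg at hc
  have hcov : ⋃₀ T = Set.univ := by
    ext w; simp only [Set.mem_sUnion, Set.mem_univ, iff_true]
    obtain ⟨A, hA1, hA2⟩ := hc w
    exact ⟨A, hA1, hA2⟩
  have : covMeager ≤ #T := by
    show sInf _ ≤ #T
    exact csInf_le (OrderBot.bddBelow _) ⟨T, hm, hcov, rfl⟩
  exact absurd h (not_lt.2 this)

theorem addMeager_le {S : Set (Set (ℕ → ℕ))} (h1 : ∀ A ∈ S, IsMeagre A)
    (h2 : ¬ IsMeagre (⋃₀ S)) : addMeager ≤ #S :=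
  csInf_le (OrderBot.bddBelow _) ⟨S, h1, h2, rfl⟩


theorem orb_le_length (w : ℕ → ℕ) (u : List ℕ) (i : ℕ) : u.length ≤ (orb w u i).length := by
  rcases Nat.eq_zero_or_pos i with h | h
  · subst h; rw [orb_zero]
  · have := orb_length_mono w u h
    rw [orb_zero] at this; omega

/-- THE HARD DIRECTION: a small union of meagre sets is meagre. -/
theorem hard_direction {S : Set (Set (ℕ → ℕ))} (hS : ∀ A ∈ S, IsMeagre A)
    (hb : #S < bNumber) (hcov : #S < covMeager) : IsMeagre (⋃₀ S) := by
  classical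
  -- master functions
  have hmaster : ∀ A : Set (ℕ → ℕ), ∃ Φ, Ext Φ ∧ (A ∈ S → ∀ g, MatchP Φ g → g ∉ A) := by
    intro A
    by_cases hA : A ∈ S
    · obtain ⟨Φ, h1, h2⟩ := exists_master (hS A hA)
      exact ⟨Φ, h1, fun _ => h2⟩
    · refine ⟨fun s => s ++ [0], fun s => ⟨List.prefix_append _ _, by simp⟩, fun h => absurd h hA⟩
  choose Φm hExt hAvoid using hmaster
  -- cov step: a parameter w hitting every Φm A densely along every orbit
  have hT : ∀ B ∈ (fun A => BadP (Φm A)) '' S, IsMeagre B := by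
    rintro B ⟨A, hA, rfl⟩
    exact meagre_badP (hExt A)
  obtain ⟨w, hw⟩ := escape_of_lt_cov hT (lt_of_le_of_lt Cardinal.mk_image_le hcov)
  have hhits : ∀ A ∈ S, ∀ u : List ℕ, ∃ i, Ψ w (orb w u i) = Φm A (orb w u i) := by
    intro A hA u
    have := hw _ (Set.mem_image_of_mem _ hA)
    rw [BadP] at this
    by_contra hc
    exact this (Set.mem_iUnion.2 ⟨u, fun h => hc h⟩)
  -- b step: dominate the first-hitting times
  set ι : Set (ℕ → ℕ) → (ℕ → ℕ) := fun A n =>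
    if h : A ∈ S then Nat.find (hhits A h (dec n)) else 0 with hι
  obtain ⟨R, hR⟩ := bounded_of_lt_b (G := ι '' S) (lt_of_le_of_lt Cardinal.mk_image_le hb)
  -- the comeagre set
  set Run : List ℕ → List ℕ := fun s => orb w s (R (code s) + 1) with hRun
  set C : ℕ → Set (ℕ → ℕ) := fun N => ⋃ s ∈ {s : List ℕ | N ≤ s.length}, Cyl (Run s) with hC
  have hCopen : ∀ N, IsOpen (C N) := by
    intro N
    exact isOpen_biUnion fun s _ => isOpen_cyl _
  have hCdense : ∀ N, Dense (C N) := by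
    intro N
    rw [dense_iff_inter_open]
    rintro U hU ⟨g₀, hg₀⟩
    obtain ⟨n, hn⟩ := cylinder_basis hU hg₀
    set s : List ℕ := init g₀ n ++ List.replicate N 0 with hs
    have hslen : N ≤ s.length := by rw [hs]; simp
    obtain ⟨y, hy⟩ := cyl_nonempty (Run s)
    refine ⟨y, ?_, ?_⟩
    · apply hn
      rw [cyl_def]
      have h1 : init g₀ n <+: s := List.prefix_append _ _
      have h2 : s <+: Run s := by
        rw [hRun]
        have := orb_prefix w s (i := 0) (j := R (code s) + 1) (by omega)
        rwa [orb_zero] at this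
      rw [cyl_def] at hy
      exact pfx_of_prefix (h1.trans h2) hy
    · exact Set.mem_biUnion hslen hy
  -- every element of the intersection escapes every A ∈ S
  have hescape : ∀ g, (∀ N, g ∈ C N) → ∀ A ∈ S, g ∉ A := by
    intro g hg A hA
    apply hAvoid A hA
    intro N
    -- eventual bound for A's hitting times
    have hmem : ι A ∈ ι '' S := Set.mem_image_of_mem _ hA
    obtain ⟨nA, hnA⟩ := eventually_atTop.1 (hR _ hmem)
    -- all stems with small code have length < L
    set L : ℕ := (Finset.range nA).sup (fun i => (dec i).length) + 1 with hL
    obtain ⟨s, hslen, hsg⟩ := Set.mem_iUnion₂.1 (hg (max N L))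
    rw [Set.mem_setOf_eq] at hslen
    rw [cyl_def] at hsg
    have hsg : Pfx (Run s) g := hsg
    have hcode : nA ≤ code s := by
      by_contra hc
      push_neg at hc
      have h1 : (dec (code s)).length ≤ (Finset.range nA).sup (fun i => (dec i).length) :=
        Finset.le_sup (f := fun i => (dec i).length) (Finset.mem_range.2 hc)
      rw [dec_code] at h1
      omega
    have hbound := hnA (code s) hcode
    rw [hι] at hbound
    simp only [hA, dif_pos] at hbound
    -- `Nat.find` over `dec (code s)`; rewrite to `s`
    have hfind := Nat.find_spec (hhits A hA (dec (code s)))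
    set i := Nat.find (hhits A hA (dec (code s))) with hi
    rw [dec_code] at hfind
    have hiR : i ≤ R (code s) := hbound
    set σ := orb w s i with hσ
    refine ⟨σ, ?_, ?_, ?_⟩
    · refine pfx_of_prefix ?_ hsg
      rw [hRun]
      exact orb_prefix w s (by omega)
    · rw [hσ]
      have := orb_le_length w s i
      omega
    · rw [← hfind, ← orb_succ]
      refine pfx_of_prefix ?_ hsg
      rw [hRun]
      exact orb_prefix w s (by omega)
  -- conclude
  have hsub : ⋃₀ S ⊆ ⋃ N : ℕ, (C N)ᶜ := by
    intro g hg
    obtain ⟨A, hA, hgA⟩ := hg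
    by_contra hc
    simp only [Set.mem_iUnion, Set.mem_compl_iff, not_exists, not_not] at hc
    exact hescape g hc A hA hgA
  refine IsMeagre.mono hsub ?_
  apply isMeagre_iUnion
  intro N
  apply nwd_meagre
  rw [IsClosed.isNowhereDense_iff (hCopen N).isClosed_compl]
  rw [interior_compl, (hCdense N).closure_eq, Set.compl_univ]


/-- monotone strictly-inflationary majorant of `f` -/
def fhat (f : ℕ → ℕ) (n : ℕ) : ℕ := (Finset.range (n+1)).sup f + n + 1

theorem fhat_mono (f : ℕ → ℕ) {n m : ℕ} (h : n ≤ m) : fhat f n ≤ fhat f m := by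
  unfold fhat
  have := Finset.sup_mono (f := f) (Finset.range_subset_range.2 (by omega : n + 1 ≤ m + 1))
  omega

theorem lt_fhat (f : ℕ → ℕ) (n : ℕ) : n < fhat f n := by unfold fhat; omega

theorem le_fhat (f : ℕ → ℕ) (n : ℕ) : f n ≤ fhat f n := by
  have := Finset.le_sup (f := f) (Finset.mem_range.2 (Nat.lt_succ_self n))
  simp only [Nat.succ_eq_add_one] at this
  unfold fhat; omega

/-- the interval endpoints: iterates of `fhat f` -/
def aseq (f : ℕ → ℕ) : ℕ → ℕ
  | 0 => 0
  | (k+1) => fhat f (aseq f k)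

theorem aseq_lt (f : ℕ → ℕ) (k : ℕ) : aseq f k < aseq f (k+1) := lt_fhat f _

theorem le_aseq (f : ℕ → ℕ) (k : ℕ) : k ≤ aseq f k := by
  induction k with
  | zero => simp [aseq]
  | succ k ih => have := aseq_lt f k; omega

/-- the meagre set attached to `f`: eventually, no `fhat f`-interval is identically `0`. -/
def Mf (f : ℕ → ℕ) : Set (ℕ → ℕ) :=
  {g | ∃ K, ∀ k, K ≤ k → ∃ j, aseq f k ≤ j ∧ j < aseq f (k+1) ∧ g j ≠ 0}

theorem meagre_Mf (f : ℕ → ℕ) : IsMeagre (Mf f) := by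
  classical
  set Z : ℕ → Set (ℕ → ℕ) :=
    fun k => {g | ∀ j, aseq f k ≤ j → j < aseq f (k+1) → g j = 0} with hZ
  have hZopen : ∀ k, IsOpen (Z k) := by
    intro k
    have : Z k = ⋂ j : Fin (aseq f (k+1)),
        {g : ℕ → ℕ | aseq f k ≤ (j : ℕ) → g j = 0} := by
      ext g
      simp only [hZ, Set.mem_setOf_eq, Set.mem_iInter]
      constructor
      · intro h j hj; exact h j hj j.2
      · intro h j h1 h2; exact h ⟨j, h2⟩ h1
    rw [this]
    refine isOpen_iInter_of_finite fun j => ?_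
    by_cases hj : aseq f k ≤ (j : ℕ)
    · have : {g : ℕ → ℕ | aseq f k ≤ (j : ℕ) → g j = 0} =
          (fun g : ℕ → ℕ => g (j : ℕ)) ⁻¹' {0} := by
        ext g; simp [hj]
      rw [this]
      exact (continuous_apply _).isOpen_preimage _ (isOpen_discrete _)
    · have : {g : ℕ → ℕ | aseq f k ≤ (j : ℕ) → g j = 0} = Set.univ := by
        ext g; simp [hj]
      rw [this]; exact isOpen_univ
  set U : ℕ → Set (ℕ → ℕ) := fun K => ⋃ k ∈ {k : ℕ | K ≤ k}, Z k with hU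
  have hUopen : ∀ K, IsOpen (U K) := fun K => isOpen_biUnion fun k _ => hZopen k
  have hUdense : ∀ K, Dense (U K) := by
    intro K
    rw [dense_iff_inter_open]
    rintro V hV ⟨g₀, hg₀⟩
    obtain ⟨n, hn⟩ := cylinder_basis hV hg₀
    set y : ℕ → ℕ := fun i => if i < n then g₀ i else 0 with hy
    set k := max K n with hk
    refine ⟨y, ?_, ?_⟩
    · apply hn
      rw [cyl_def]
      show Pfx (init g₀ n) y
      rw [pfx_def]
      intro i hi
      rw [init_length] at hi
      have := (pfx_def _ _).1 (pfx_init g₀ n) i (by rw [init_length]; exact hi)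
      rw [← this]
      simp [hy, hi]
    · refine Set.mem_biUnion (show K ≤ k by omega) ?_
      intro j h1 h2
      have : n ≤ j := le_trans (le_trans (le_max_right K n) (le_aseq f k)) h1
      simp [hy]; omega
  have hsub : Mf f ⊆ ⋃ K : ℕ, (U K)ᶜ := by
    intro g hg
    obtain ⟨K, hK⟩ := hg
    refine Set.mem_iUnion.2 ⟨K, ?_⟩
    intro hgU
    obtain ⟨k, hk1, hk2⟩ := Set.mem_iUnion₂.1 hgU
    obtain ⟨j, h1, h2, h3⟩ := hK k hk1
    exact h3 (hk2 j h1 h2)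
  refine IsMeagre.mono hsub ?_
  apply isMeagre_iUnion
  intro K
  apply nwd_meagre
  rw [IsClosed.isNowhereDense_iff (hUopen K).isClosed_compl]
  rw [interior_compl, (hUdense K).closure_eq, Set.compl_univ]

/-- dip condition -/
def Dip (f : ℕ → ℕ) (Φ : List ℕ → List ℕ) (u : List ℕ) (ℓ : ℕ) : Prop :=
  ∃ b, u.length + ℓ ≤ b ∧ fhat f b ≤ (Φ (u ++ List.replicate ℓ 1)).length

/-- the recursively defined run -/
noncomputable def runSeq (Φ : List ℕ → List ℕ) (ℓu : List ℕ → ℕ) : ℕ → List ℕ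
  | 0 => []
  | (j+1) => Φ (runSeq Φ ℓu j ++ List.replicate (ℓu (runSeq Φ ℓu j)) 1)

section Run

variable {Φ : List ℕ → List ℕ} {ℓu : List ℕ → ℕ} (hΦ : Ext Φ) (hℓ : ∀ u, 1 ≤ ℓu u)

private noncomputable abbrev t (Φ : List ℕ → List ℕ) (ℓu : List ℕ → ℕ) := runSeq Φ ℓu
private noncomputable abbrev sstem (Φ : List ℕ → List ℕ) (ℓu : List ℕ → ℕ) (j : ℕ) : List ℕ :=
  runSeq Φ ℓu j ++ List.replicate (ℓu (runSeq Φ ℓu j)) 1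

theorem runSeq_succ (Φ : List ℕ → List ℕ) (ℓu : List ℕ → ℕ) (j : ℕ) :
    runSeq Φ ℓu (j+1) = Φ (sstem Φ ℓu j) := rfl

include hΦ in
theorem runSeq_prefix_succ (j : ℕ) : runSeq Φ ℓu j <+: runSeq Φ ℓu (j+1) :=
  (List.prefix_append _ _).trans (hΦ _).1

include hΦ hℓ in
theorem runSeq_length_succ (j : ℕ) :
    (runSeq Φ ℓu j).length + ℓu (runSeq Φ ℓu j) < (runSeq Φ ℓu (j+1)).length := by
  have h := (hΦ (sstem Φ ℓu j)).2
  simp only [sstem, List.length_append, List.length_replicate] at h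
  rw [runSeq_succ]
  simp only [sstem]
  omega

include hΦ hℓ in
theorem runSeq_length_ge (j : ℕ) : j ≤ (runSeq Φ ℓu j).length := by
  induction j with
  | zero => simp
  | succ j ih =>
    have := runSeq_length_succ hΦ hℓ j
    omega

include hΦ in
theorem runSeq_prefix {j m : ℕ} (h : j ≤ m) : runSeq Φ ℓu j <+: runSeq Φ ℓu m := by
  induction m with
  | zero =>
    have : j = 0 := by omega
    subst this; exact List.prefix_refl _
  | succ m ih =>
    rcases Nat.lt_or_ge j (m+1) with h' | h'
    · exact (ih (by omega)).trans (runSeq_prefix_succ hΦ m)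
    · have : j = m + 1 := by omega
      subst this; exact List.prefix_refl _

/-- the limit of the run -/
noncomputable def runLim (Φ : List ℕ → List ℕ) (ℓu : List ℕ → ℕ) : ℕ → ℕ :=
  fun i => (runSeq Φ ℓu (i+1)).getD i 0

include hΦ hℓ in
theorem pfx_runSeq (j : ℕ) : Pfx (runSeq Φ ℓu j) (runLim Φ ℓu) := by
  rw [pfx_def]
  intro i hi
  unfold runLim
  have hlen : i < (runSeq Φ ℓu (i+1)).length := by
    have := runSeq_length_ge hΦ hℓ (i+1); omega
  rw [List.getD_eq_getElem _ _ hlen]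
  rcases Nat.le_total j (i+1) with h | h
  · exact ((runSeq_prefix hΦ (ℓu := ℓu) h).getElem hi).symm
  · exact (runSeq_prefix hΦ (ℓu := ℓu) h).getElem hlen

include hΦ hℓ in
theorem match_runLim : MatchP Φ (runLim Φ ℓu) := by
  intro N
  have hpN1 : Pfx (runSeq Φ ℓu (N+1)) (runLim Φ ℓu) := pfx_runSeq hΦ hℓ (N+1)
  refine ⟨sstem Φ ℓu N, ?_, ?_, ?_⟩
  · refine pfx_of_prefix ?_ hpN1
    rw [runSeq_succ]
    exact (hΦ _).1
  · have h1 := runSeq_length_ge hΦ hℓ N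
    simp only [sstem, List.length_append]
    omega
  · rw [← runSeq_succ Φ ℓu N]
    exact hpN1

include hΦ hℓ in
theorem runLim_padding {j i : ℕ} (h1 : (runSeq Φ ℓu j).length ≤ i)
    (h2 : i < (runSeq Φ ℓu j).length + ℓu (runSeq Φ ℓu j)) : runLim Φ ℓu i = 1 := by
  have hpfx : Pfx (sstem Φ ℓu j) (runLim Φ ℓu) := by
    refine pfx_of_prefix ?_ (pfx_runSeq hΦ hℓ (j+1))
    rw [runSeq_succ]
    exact (hΦ _).1
  have hlen : i < (sstem Φ ℓu j).length := by
    simp only [sstem, List.length_append, List.length_replicate]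
    omega
  have := (pfx_def _ _).1 hpfx i hlen
  rw [this]
  rw [List.getElem_append_right h1]
  exact List.getElem_replicate _

include hΦ hℓ in
theorem exists_round (A : ℕ) :
    ∃ j, (runSeq Φ ℓu j).length ≤ A ∧ A < (runSeq Φ ℓu (j+1)).length := by
  classical
  have hA : ∃ j, A < (runSeq Φ ℓu (j+1)).length :=
    ⟨A, by have := runSeq_length_ge hΦ hℓ (A+1); omega⟩
  set j := Nat.find hA with hj
  refine ⟨j, ?_, Nat.find_spec hA⟩
  rcases Nat.eq_zero_or_pos j with h0 | h0
  · rw [h0]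
    show (runSeq Φ ℓu 0).length ≤ A
    simp [runSeq]
  · have := Nat.find_min hA (m := j - 1) (by omega)
    push_neg at this
    have hco : j - 1 + 1 = j := by omega
    rwa [hco] at this

include hΦ hℓ in
theorem runLim_mem_Mf {f : ℕ → ℕ} (hnd : ∀ u, ¬ Dip f Φ u (ℓu u)) :
    runLim Φ ℓu ∈ Mf f := by
  refine ⟨0, fun k _ => ?_⟩
  set A := aseq f k with hA
  have hB : aseq f (k+1) = fhat f A := rfl
  obtain ⟨j, hj1, hj2⟩ := exists_round hΦ hℓ A
  set p := (runSeq Φ ℓu j).length with hp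
  set q := p + ℓu (runSeq Φ ℓu j) with hq
  rcases Nat.lt_or_ge A q with hcase | hcase
  · -- A is a padding coordinate
    refine ⟨A, le_refl _, ?_, ?_⟩
    · rw [hB]; exact lt_fhat f A
    · rw [runLim_padding hΦ hℓ hj1 hcase]; omega
  · -- A is in the block; compare fhat f A with the end of the block
    rcases Nat.lt_or_ge (runSeq Φ ℓu (j+1)).length (fhat f A) with hcase2 | hcase2
    · -- the start of the next padding is in the interval
      refine ⟨(runSeq Φ ℓu (j+1)).length, by omega, by rw [hB]; omega, ?_⟩
      have h1 : (runSeq Φ ℓu (j+1)).length ≤ (runSeq Φ ℓu (j+1)).length := le_refl _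
      have h2 : (runSeq Φ ℓu (j+1)).length <
          (runSeq Φ ℓu (j+1)).length + ℓu (runSeq Φ ℓu (j+1)) := by
        have := hℓ (runSeq Φ ℓu (j+1)); omega
      rw [runLim_padding hΦ hℓ h1 h2]; omega
    · -- a dip: contradiction
      exfalso
      apply hnd (runSeq Φ ℓu j)
      refine ⟨A, by omega, ?_⟩
      have : Φ (runSeq Φ ℓu j ++ List.replicate (ℓu (runSeq Φ ℓu j)) 1) =
          runSeq Φ ℓu (j+1) := (runSeq_succ Φ ℓu j).symm
      rw [this]
      exact hcase2

end Run



theorem add_le_b : addMeager ≤ bNumber := by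
  show addMeager ≤ sInf _
  apply le_csInf b_set_nonempty
  rintro c ⟨F, hF, rfl⟩
  have hnm : ¬ IsMeagre (⋃₀ ((fun f => Mf f) '' F)) := by
    intro hme
    obtain ⟨Φ, hΦ, hAvoid⟩ := exists_master hme
    have hdip : ∀ f ∈ F, ∃ u : List ℕ, ∀ ℓ, 1 ≤ ℓ → Dip f Φ u ℓ := by
      intro f hf
      by_contra hc
      push_neg at hc
      choose ℓu hℓ1 hℓ2 using hc
      have hmem : runLim Φ ℓu ∈ Mf f := runLim_mem_Mf hΦ hℓ1 hℓ2
      exact hAvoid _ (match_runLim hΦ hℓ1) ⟨Mf f, ⟨f, hf, rfl⟩, hmem⟩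
    choose uf huf using hdip
    set H : ℕ → ℕ := fun n => (Finset.range (n+1)).sup
      (fun i => (Φ (dec i ++ List.replicate (n - (dec i).length) 1)).length) with hH
    apply hF
    refine ⟨H, ?_⟩
    intro f hf
    rw [Filter.eventually_atTop]
    refine ⟨max ((uf f hf).length + 1) (code (uf f hf)), fun n hn => ?_⟩
    obtain ⟨b, hb1, hb2⟩ := huf f hf (n - (uf f hf).length)
      (by simp at hn; omega)
    have h2 : fhat f n ≤ (Φ (uf f hf ++ List.replicate (n - (uf f hf).length) 1)).length := by
      refine le_trans (fhat_mono f ?_) hb2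
      simp at hn; omega
    have h3 : (Φ (uf f hf ++ List.replicate (n - (uf f hf).length) 1)).length ≤ H n := by
      have hle := Finset.le_sup
        (f := fun i => (Φ (dec i ++ List.replicate (n - (dec i).length) 1)).length)
        (Finset.mem_range.2 (show code (uf f hf) < n+1 by simp at hn; omega))
      simp only [dec_code] at hle
      exact hle
    have h4 := le_fhat f n
    omega
  calc addMeager ≤ #((fun f => Mf f) '' F) :=
        addMeager_le (by rintro A ⟨f, hf, rfl⟩; exact meagre_Mf f) hnm
    _ ≤ #F := Cardinal.mk_image_le



theorem add_le_cov : addMeager ≤ covMeager := by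
  show addMeager ≤ sInf _
  apply le_csInf cov_set_nonempty
  rintro c ⟨S, h1, h2, rfl⟩
  exact addMeager_le h1 (not_meagre_of_sUnion_univ h2)

end MT

end

/-- Miller–Truss: `add(M) = min(b, cov(M))`. -/
theorem stmt_14 : addMeager = min bNumber covMeager := by
  apply le_antisymm
  · exact le_min MT.add_le_b MT.add_le_cov
  · show min bNumber covMeager ≤ sInf _
    apply le_csInf MT.add_set_nonempty
    rintro c ⟨S, h1, h2, rfl⟩
    by_contra hlt
    rw [not_le] at hlt
    exact h2 (MT.hard_direction h1 (lt_of_lt_of_le hlt (min_le_left _ _))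
      (lt_of_lt_of_le hlt (min_le_right _ _)))
end

section
/- cf(M) = max(d, non(M)), where d is the dominating number, non(M) the uniformity of the meager ideal, and cf(M) the cofinality of the meager ideal. -/
open Filter Cardinal

namespace CofMeager

open Set

abbrev Ba := ℕ → ℕ

lemma exists_cylinder_subset {u : Set Ba} (hu : IsOpen u) {x : Ba} (hx : x ∈ u) :
    ∃ n, PiNat.cylinder x n ⊆ u := by
  obtain ⟨v, ⟨z, n, rfl⟩, hxv, hvu⟩ :=
    (PiNat.isTopologicalBasis_cylinders (fun _ : ℕ => ℕ)).exists_subset_of_mem_open hx hu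
  exact ⟨n, by rw [PiNat.mem_cylinder_iff_eq.1 hxv]; exact hvu⟩

lemma dense_of_cylinders {s : Set Ba} (h : ∀ (x : Ba) (n : ℕ), ∃ y ∈ s, ∀ i < n, y i = x i) :
    Dense s := by
  rw [dense_iff_inter_open]
  rintro U hU ⟨x, hx⟩
  obtain ⟨n, hn⟩ := exists_cylinder_subset hU hx
  obtain ⟨y, hy, hyx⟩ := h x n
  exact ⟨y, hn hyx, hy⟩

lemma nwd_ext {F : Set Ba} (hcl : IsClosed F) (hnwd : IsNowhereDense F) (x : Ba) (n : ℕ) :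
    ∃ (z : Ba) (p : ℕ), n ≤ p ∧ z ∈ PiNat.cylinder x n ∧ PiNat.cylinder z p ∩ F = ∅ := by
  have hint : interior F = ∅ := hcl.isNowhereDense_iff.1 hnwd
  have hns : ¬ PiNat.cylinder x n ⊆ F := by
    intro hsub
    have hx : x ∈ interior F :=
      interior_maximal hsub (PiNat.isOpen_cylinder _ _ _) (PiNat.self_mem_cylinder x n)
    rw [hint] at hx; exact hx
  obtain ⟨z, hz1, hz2⟩ := not_subset.1 hns
  obtain ⟨p, hp⟩ := exists_cylinder_subset hcl.isOpen_compl hz2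
  refine ⟨z, max n p, le_max_left _ _, hz1, ?_⟩
  rw [Set.eq_empty_iff_forall_notMem]
  rintro w ⟨hw1, hw2⟩
  exact hp (PiNat.cylinder_anti z (le_max_right n p) hw1) hw2

/-- paste: use `s` below `n` and `z` from `n` on. -/
def paste (n : ℕ) (s z : Ba) : Ba := fun k => if k < n then s k else z k

lemma blockAux {F : Set Ba} (hcl : IsClosed F) (hnwd : IsNowhereDense F) (n : ℕ)
    (G : Finset Ba) :
    ∃ (z : Ba) (p : ℕ), n ≤ p ∧ ∀ s ∈ G, PiNat.cylinder (paste n s z) p ∩ F = ∅ := by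
  classical
  induction G using Finset.induction_on with
  | empty => exact ⟨fun _ => 0, n, le_rfl, by simp⟩
  | @insert s G hsG ih =>
    obtain ⟨z, p, hnp, hz⟩ := ih
    obtain ⟨z', p', hpp', hz'mem, hz'⟩ := nwd_ext hcl hnwd (paste n s z) p
    refine ⟨z', p', hnp.trans hpp', ?_⟩
    intro t ht
    rcases Finset.mem_insert.1 ht with rfl | htG
    · have hcyl : PiNat.cylinder (paste n t z') p' = PiNat.cylinder z' p' := by
        rw [← PiNat.mem_cylinder_iff_eq]
        intro i hip'
        by_cases hin : i < n
        · have := hz'mem i (hin.trans_le hnp)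
          simp only [paste, if_pos hin] at this ⊢
          exact this.symm
        · simp [paste, if_neg hin]
      rw [hcyl]; exact hz'
    · have hsub : PiNat.cylinder (paste n t z') p' ⊆ PiNat.cylinder (paste n t z) p := by
        intro w hw i hip
        have hwi := hw i (hip.trans_le hpp')
        by_cases hin : i < n
        · simpa [paste, if_pos hin] using hwi
        · have hzi : z' i = z i := by
            have := hz'mem i hip
            simpa [paste, if_neg hin] using this
          simp only [paste, if_neg hin] at hwi ⊢
          rw [hwi, hzi]
      rw [Set.eq_empty_iff_forall_notMem]
      rintro w ⟨hw1, hw2⟩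
      exact (Set.eq_empty_iff_forall_notMem.1 (hz t htG)) w ⟨hsub hw1, hw2⟩

lemma block {F : Set Ba} (hcl : IsClosed F) (hnwd : IsNowhereDense F) (n : ℕ) :
    ∃ (z : Ba) (p : ℕ), n < p ∧ ∀ x : Ba, (∀ k < n, x k < n) →
      (∀ k, n ≤ k → k < p → x k = z k) → x ∉ F := by
  classical
  obtain ⟨z, p, hnp, hz⟩ := blockAux hcl hnwd n
      ((Finset.univ : Finset (Fin n → Fin n)).image
        (fun σ => fun k => if h : k < n then (σ ⟨k, h⟩ : ℕ) else 0))
  refine ⟨z, p + 1, lt_of_le_of_lt hnp (Nat.lt_succ_self p), ?_⟩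
  intro x hxb hxz hxF
  set s : Ba := fun k => if h : k < n then x k else 0 with hs
  have hsG : s ∈ (Finset.univ : Finset (Fin n → Fin n)).image
      (fun σ => fun k => if h : k < n then (σ ⟨k, h⟩ : ℕ) else 0) := by
    refine Finset.mem_image.2 ⟨fun i => ⟨x i.1, hxb i.1 i.2⟩, Finset.mem_univ _, ?_⟩
    funext k
    by_cases h : k < n <;> simp [h, hs]
  have hx : x ∈ PiNat.cylinder (paste n s z) p := by
    intro i hip
    by_cases hin : i < n
    · simp [paste, if_pos hin, hs, hin]
    · simp only [paste, if_neg hin]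
      exact hxz i (le_of_not_gt hin) (hip.trans (Nat.lt_succ_self p))
  exact (Set.eq_empty_iff_forall_notMem.1 (hz s hsG)) x ⟨hx, hxF⟩

/-- x behaves well at block m: matches y on [e m, e (m+1)) and is below e m before e m. -/
def Good (e y : ℕ → ℕ) (x : Ba) (m : ℕ) : Prop :=
  (∀ k, e m ≤ k → k < e (m + 1) → x k = y k) ∧ ∀ k < e m, x k < e m

def MSet (e y : ℕ → ℕ) : Set Ba := {x | ∀ᶠ m in atTop, ¬ Good e y x m}

lemma isOpen_good (e y : ℕ → ℕ) (m : ℕ) : IsOpen {x : Ba | Good e y x m} := by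
  rw [(PiNat.isTopologicalBasis_cylinders (fun _ : ℕ => ℕ)).isOpen_iff]
  intro x hx
  refine ⟨PiNat.cylinder x (max (e m) (e (m + 1))), ⟨x, _, rfl⟩,
    PiNat.self_mem_cylinder _ _, ?_⟩
  intro w hw
  obtain ⟨h1, h2⟩ := hx
  constructor
  · intro k hk1 hk2
    rw [hw k (lt_of_lt_of_le hk2 (le_max_right _ _))]; exact h1 k hk1 hk2
  · intro k hk
    rw [hw k (lt_of_lt_of_le hk (le_max_left _ _))]; exact h2 k hk

lemma isMeagre_MSet {e y : ℕ → ℕ} (he : StrictMono e) : IsMeagre (MSet e y) := by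
  have hU : ∀ N : ℕ, (⋃ m, ⋃ (_ : N ≤ m), {x : Ba | Good e y x m}) ∈ residual Ba := by
    intro N
    apply residual_of_dense_open
    · exact isOpen_iUnion fun m => isOpen_iUnion fun _ => isOpen_good e y m
    · apply dense_of_cylinders
      intro x n
      set b := (Finset.range n).sup x with hb
      set m := max N (n + b + 1) with hm
      have hem : n + b + 1 ≤ e m := le_trans (le_max_right _ _) he.le_apply
      refine ⟨fun k => if k < n then x k else if k < e m then 0 else y k, ?_, ?_⟩
      · refine Set.mem_iUnion.2 ⟨m, Set.mem_iUnion.2 ⟨le_max_left _ _, ?_, ?_⟩⟩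
        · intro k hk1 _
          have h1 : ¬ k < n := by omega
          have h2 : ¬ k < e m := by omega
          simp [h1, h2]
        · intro k hk
          by_cases h1 : k < n
          · have : x k ≤ b := Finset.le_sup (Finset.mem_range.2 h1)
            simp only [if_pos h1]
            omega
          · simp only [if_neg h1, if_pos hk]
            omega
      · intro i hi; simp [hi]
  have hcompl : (MSet e y)ᶜ = ⋂ N, ⋃ m, ⋃ (_ : N ≤ m), {x : Ba | Good e y x m} := by
    ext x
    simp only [MSet, Set.mem_compl_iff, Set.mem_setOf_eq, not_eventually, not_not,
      Set.mem_iInter, Set.mem_iUnion, Set.mem_setOf_eq]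
    constructor
    · intro h N
      obtain ⟨m, h1, h2⟩ := frequently_atTop.1 h N
      exact ⟨m, h1, h2⟩
    · intro h
      refine frequently_atTop.2 fun N => ?_
      obtain ⟨m, h1, h2⟩ := h N
      exact ⟨m, h1, h2⟩
  rw [IsMeagre, hcompl]
  exact countable_iInter_mem.2 hU

lemma interior_union_empty {X : Type*} [TopologicalSpace X] {s t : Set X}
    (hs : IsClosed s) (hs2 : interior s = ∅) (ht2 : interior t = ∅) :
    interior (s ∪ t) = ∅ := by
  have h1 : interior (s ∪ t) \ s ⊆ interior t := by
    apply interior_maximal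
    · rintro z ⟨hz, hzs⟩
      rcases interior_subset hz with h | h
      · exact absurd h hzs
      · exact h
    · exact isOpen_interior.sdiff hs
  rw [ht2, Set.subset_empty_iff, Set.diff_eq_empty] at h1
  have h2 : interior (s ∪ t) ⊆ interior s := interior_maximal h1 isOpen_interior
  rw [hs2] at h2
  exact Set.eq_empty_iff_forall_notMem.2 fun x hx => h2 hx

/-- increasing closed nwd cover of a meager set -/
lemma meagre_cover {A : Set Ba} (hA : IsMeagre A) :
    ∃ F : ℕ → Set Ba, (∀ n, IsClosed (F n)) ∧ (∀ n, IsNowhereDense (F n)) ∧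
      Monotone F ∧ A ⊆ ⋃ n, F n := by
  obtain ⟨S, hSnwd, hScnt, hSsub⟩ := isMeagre_iff_countable_union_isNowhereDense.1 hA
  rcases S.eq_empty_or_nonempty with rfl | hSne
  · refine ⟨fun _ => ∅, fun _ => isClosed_empty, fun _ => isNowhereDense_empty,
      monotone_const, ?_⟩
    simpa using hSsub
  obtain ⟨f, rfl⟩ := hScnt.exists_eq_range hSne
  set F : ℕ → Set Ba := fun n =>
    Nat.rec (closure (f 0)) (fun k ih => ih ∪ closure (f (k + 1))) n with hF
  have hcl : ∀ n, IsClosed (F n) := by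
    intro n
    induction n with
    | zero => exact isClosed_closure
    | succ k ih => exact ih.union isClosed_closure
  have hnwdF : ∀ n, interior (F n) = ∅ := by
    intro n
    induction n with
    | zero => exact hSnwd (f 0) ⟨0, rfl⟩
    | succ k ih =>
      exact interior_union_empty (hcl k) ih (hSnwd (f (k + 1)) ⟨k + 1, rfl⟩)
  have hmono : Monotone F := by
    apply monotone_nat_of_le_succ
    intro n
    exact Set.subset_union_left
  refine ⟨F, hcl, fun n => ((hcl n).isNowhereDense_iff).2 (hnwdF n), hmono, ?_⟩
  intro x hx
  obtain ⟨t, ⟨i, rfl⟩, hxt⟩ := hSsub hx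
  have hfi : f i ⊆ F i := by
    cases i with
    | zero => exact subset_closure
    | succ k => exact subset_closure.trans Set.subset_union_right
  exact Set.mem_iUnion.2 ⟨i, hfi hxt⟩

lemma exists_master {F : ℕ → Set Ba} (hcl : ∀ m, IsClosed (F m))
    (hnwd : ∀ m, IsNowhereDense (F m)) :
    ∃ e y : ℕ → ℕ, StrictMono e ∧ ∀ m (x : Ba), Good e y x m → x ∉ F m := by
  have step : ∀ (m : ℕ) (st : ℕ × Ba), ∃ st' : ℕ × Ba,
      st.1 < st'.1 ∧ (∀ k < st.1, st'.2 k = st.2 k) ∧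
      ∀ x : Ba, (∀ k < st.1, x k < st.1) →
        (∀ k, st.1 ≤ k → k < st'.1 → x k = st'.2 k) → x ∉ F m := by
    intro m st
    obtain ⟨z, p, hp, hz⟩ := block (hcl m) (hnwd m) st.1
    refine ⟨(p, paste st.1 st.2 z), hp, fun k hk => by simp [paste, if_pos hk], ?_⟩
    intro x hb hee
    refine hz x hb fun k h1 h2 => ?_
    rw [hee k h1 h2]
    simp [paste, not_lt.2 h1]
  let it : ℕ → ℕ × Ba := fun m =>
    Nat.rec ((0 : ℕ), fun _ => (0 : ℕ)) (fun m ih => Classical.choose (step m ih)) m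
  have hit : ∀ m, (it m).1 < (it (m + 1)).1 ∧
      (∀ k < (it m).1, (it (m + 1)).2 k = (it m).2 k) ∧
      ∀ x : Ba, (∀ k < (it m).1, x k < (it m).1) →
        (∀ k, (it m).1 ≤ k → k < (it (m + 1)).1 → x k = (it (m + 1)).2 k) → x ∉ F m :=
    fun m => Classical.choose_spec (step m (it m))
  set e : ℕ → ℕ := fun m => (it m).1 with hedef
  have he : StrictMono e := strictMono_nat_of_lt_succ fun m => (hit m).1
  set Y : Ba := fun k => (it (k + 1)).2 k with hY
  have stab : ∀ j i, i ≤ j → ∀ k, k < e i → (it j).2 k = (it i).2 k := by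
    intro j
    induction j with
    | zero =>
      intro i hi k _
      have : i = 0 := Nat.le_zero.1 hi
      subst this; rfl
    | succ j ih =>
      intro i hi k hk
      rcases Nat.eq_or_lt_of_le hi with rfl | hlt
      · rfl
      · have hij : i ≤ j := Nat.lt_succ_iff.1 hlt
        have h1 : (it (j + 1)).2 k = (it j).2 k :=
          (hit j).2.1 k (lt_of_lt_of_le hk (he.monotone hij))
        rw [h1, ih i hij k hk]
  have hYstab : ∀ m k, k < e (m + 1) → Y k = (it (m + 1)).2 k := by
    intro m k hk
    have hk1 : k < e (k + 1) := lt_of_lt_of_le (Nat.lt_succ_self k) he.le_apply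
    rcases le_total (k + 1) (m + 1) with h | h
    · exact (stab (m + 1) (k + 1) h k hk1).symm
    · exact stab (k + 1) (m + 1) h k hk
  refine ⟨e, Y, he, ?_⟩
  rintro m x ⟨hmatch, hpre⟩
  refine (hit m).2.2 x hpre fun k h1 h2 => ?_
  rw [hmatch k h1 h2]
  exact hYstab m k h2

lemma MSet_subset {e y e' y' : ℕ → ℕ} (he : StrictMono e) (he' : StrictMono e')
    (H : ∀ᶠ n in atTop, ∃ m, e' n ≤ e m ∧ e (m + 1) ≤ e' (n + 1) ∧ Good e y y' m) :
    MSet e y ⊆ MSet e' y' := by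
  intro x hx
  by_contra hx'
  have hfreq' : ∃ᶠ n in atTop, Good e' y' x n := by
    simpa [not_not] using Filter.not_eventually.1 hx'
  have hgoal : ∃ᶠ m in atTop, Good e y x m := by
    rw [frequently_atTop]
    intro M
    obtain ⟨N₀, hN₀⟩ := eventually_atTop.1 H
    obtain ⟨n, hn1, hn2⟩ := frequently_atTop.1 hfreq' (max N₀ (e M + 1))
    obtain ⟨m, hm1, hm2, hm3⟩ := hN₀ n (le_trans (le_max_left _ _) hn1)
    have hnem : n ≤ e m := le_trans he'.le_apply hm1
    have heMm : e M < e m := by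
      have : e M + 1 ≤ n := le_trans (le_max_right _ _) hn1
      omega
    have hMm : M ≤ m := le_of_lt (he.lt_iff_lt.1 heMm)
    refine ⟨m, hMm, ?_, ?_⟩
    · intro k hk1 hk2
      have hk1' : e' n ≤ k := le_trans hm1 hk1
      have hk2' : k < e' (n + 1) := lt_of_lt_of_le hk2 hm2
      rw [hn2.1 k hk1' hk2']
      exact hm3.1 k hk1 hk2
    · intro k hk
      by_cases hkn : k < e' n
      · exact lt_of_lt_of_le (hn2.2 k hkn) hm1
      · have hk1' : e' n ≤ k := le_of_not_gt hkn
        have hk2' : k < e' (n + 1) :=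
          lt_of_lt_of_le (lt_of_lt_of_le hk (he.monotone (Nat.le_succ m))) hm2
        rw [hn2.1 k hk1' hk2']
        exact hm3.2 k hk
  exact hgoal hx
  
lemma not_isMeagre_univ : ¬ IsMeagre (Set.univ : Set Ba) := by
  intro h
  rw [IsMeagre, Set.compl_univ] at h
  have hd : Dense (∅ : Set Ba) := dense_of_mem_residual h
  exact Set.not_nonempty_empty hd.nonempty

lemma isMeagre_of_countable {A : Set Ba} (h : A.Countable) : IsMeagre A := by
  rw [isMeagre_iff_countable_union_isNowhereDense]
  refine ⟨(fun a => ({a} : Set Ba)) '' A, ?_, h.image _, ?_⟩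
  · rintro t ⟨a, -, rfl⟩
    rw [IsNowhereDense, IsClosed.closure_eq isClosed_singleton,
      Set.eq_empty_iff_forall_notMem]
    intro x hx
    have hxa : x = a := by simpa using interior_subset hx
    subst hxa
    obtain ⟨n, hn⟩ := exists_cylinder_subset isOpen_interior hx
    have hmem : Function.update x n (x n + 1) ∈ PiNat.cylinder x n := by
      intro i hi
      exact Function.update_of_ne (Nat.ne_of_lt hi) _ _
    have := interior_subset (hn hmem)
    have : Function.update x n (x n + 1) = x := this
    have := congrFun this n
    simp at this
  · intro a ha
    exact ⟨{a}, ⟨a, ha, rfl⟩, rfl⟩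

/-- envelope: strictly monotone majorant -/
def env (f : ℕ → ℕ) : ℕ → ℕ := fun n => (Finset.range (n + 1)).sup f + n + 1

lemma env_mono (f : ℕ → ℕ) : Monotone (env f) := by
  intro a b hab
  unfold env
  have : (Finset.range (a + 1)).sup f ≤ (Finset.range (b + 1)).sup f :=
    Finset.sup_mono (Finset.range_subset_range.2 (by omega))
  omega

lemma lt_env (f : ℕ → ℕ) (n : ℕ) : f n < env f n := by
  have h : f n ≤ (Finset.range (n + 1)).sup f := Finset.le_sup (Finset.mem_range.2 (Nat.lt_succ_self n))
  unfold env; omega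

lemma le_env (f : ℕ → ℕ) (n : ℕ) : f n ≤ env f n := (lt_env f n).le

lemma id_lt_env (f : ℕ → ℕ) (n : ℕ) : n < env f n := by unfold env; omega

/-- iterated envelope partition -/
def EP (f : ℕ → ℕ) : ℕ → ℕ := fun n => (env f)^[n] 0

lemma EP_succ (f : ℕ → ℕ) (n : ℕ) : EP f (n + 1) = env f (EP f n) := by
  unfold EP
  rw [Function.iterate_succ_apply']

lemma EP_strictMono (f : ℕ → ℕ) : StrictMono (EP f) := by
  apply strictMono_nat_of_lt_succ
  intro n
  rw [EP_succ]
  exact id_lt_env f (EP f n)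

lemma aleph0_le_nonMeager' (c : Cardinal)
    (hc : c ∈ {c | ∃ A : Set Ba, ¬ IsMeagre A ∧ #A = c}) : ℵ₀ ≤ c := by
  obtain ⟨A, hA, rfl⟩ := hc
  by_contra h
  rw [not_le] at h
  exact hA (isMeagre_of_countable (Cardinal.lt_aleph0_iff_set_finite.1 h).countable)

end CofMeager

/-- `cf(M)`: the least size of a family of meager subsets of Baire space `ω^ω` cofinal in
the meager ideal under inclusion. -/
noncomputable def cfMeager : Cardinal :=
  sInf {c | ∃ S : Set (Set (ℕ → ℕ)), (∀ A ∈ S, IsMeagre A) ∧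
    (∀ B : Set (ℕ → ℕ), IsMeagre B → ∃ A ∈ S, B ⊆ A) ∧ #S = c}

/-- `non(M)`: the least size of a non-meager subset of Baire space. -/
noncomputable def nonMeager : Cardinal :=
  sInf {c | ∃ A : Set (ℕ → ℕ), ¬ IsMeagre A ∧ #A = c}

/-- `d`: the least size of a `≤*`-dominating family in `ω^ω`. -/
noncomputable def dNumber : Cardinal :=
  sInf {c | ∃ C : Set (ℕ → ℕ),
    (∀ f : ℕ → ℕ, ∃ g ∈ C, ∀ᶠ n in atTop, f n ≤ g n) ∧ #C = c}

namespace CofMeager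

lemma dNumber_le {S : Set (Set Ba)} (hS : ∀ A ∈ S, IsMeagre A)
    (hcof : ∀ B : Set Ba, IsMeagre B → ∃ A ∈ S, B ⊆ A) : dNumber ≤ #S := by
  classical
  have hFex : ∀ A : ↥S, ∃ F : ℕ → Set Ba, (∀ n, IsClosed (F n)) ∧
      (∀ n, IsNowhereDense (F n)) ∧ Monotone F ∧ (A : Set Ba) ⊆ ⋃ n, F n :=
    fun A => meagre_cover (hS A A.2)
  choose Fc hc1 hc2 hc3 hc4 using hFex
  have hblock : ∀ (A : ↥S) (n : ℕ), ∃ zp : Ba × ℕ, n < zp.2 ∧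
      ∀ x : Ba, (∀ k < n, x k < n) →
        (∀ k, n ≤ k → k < zp.2 → x k = zp.1 k) → x ∉ Fc A n := by
    intro A n
    obtain ⟨z, p, h1, h2⟩ := block (hc1 A n) (hc2 A n) n
    exact ⟨(z, p), h1, h2⟩
  choose zp hzp1 hzp2 using hblock
  set fA : ↥S → Ba :=
    fun A n => (zp A n).2 + (Finset.range (zp A n).2).sup (zp A n).1 + 1 with hfA
  have hdom : ∀ g : Ba, ∃ A : ↥S, ∀ᶠ n in atTop, g n ≤ fA A n := by
    intro g
    -- the bounded set B is meager
    have hBcl : IsClosed {x : Ba | ∀ k, x k < env g k} := by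
      have heq : {x : Ba | ∀ k, x k < env g k} =
          ⋂ k, (fun x : Ba => x k) ⁻¹' {j | j < env g k} := by
        ext x; simp
      rw [heq]
      exact isClosed_iInter fun k =>
        (isClosed_discrete _).preimage (continuous_apply k)
    have hBmeag : IsMeagre {x : Ba | ∀ k, x k < env g k} := by
      rw [isMeagre_iff_countable_union_isNowhereDense]
      refine ⟨{{x : Ba | ∀ k, x k < env g k}}, ?_, Set.countable_singleton _, by simp⟩
      rintro t ht
      rw [Set.mem_singleton_iff] at ht; subst ht
      rw [IsNowhereDense, hBcl.closure_eq, Set.eq_empty_iff_forall_notMem]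
      intro x hx
      obtain ⟨q, hq⟩ := exists_cylinder_subset isOpen_interior hx
      have hmem : Function.update x q (env g q) ∈ PiNat.cylinder x q :=
        fun i hi => Function.update_of_ne (Nat.ne_of_lt hi) _ _
      have h2 := interior_subset (hq hmem) q
      rw [Function.update_self] at h2
      exact lt_irrefl _ h2
    obtain ⟨A, hAS, hBA⟩ := hcof _ hBmeag
    refine ⟨⟨A, hAS⟩, ?_⟩
    by_contra hev
    set A' : ↥S := ⟨A, hAS⟩ with hA'
    have hfr : ∃ᶠ n in atTop, fA A' n < g n := by
      have := Filter.not_eventually.1 hev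
      simpa [not_le] using this
    have hstep : ∀ (l : ℕ) (t : Ba), (∀ j < l, t j < env g j) →
        ∃ w : ℕ × ℕ × Ba, l < w.1 ∧ w.1 < w.2.1 ∧
          (∀ j < w.2.1, w.2.2 j < env g j) ∧
          (∀ j < l, w.2.2 j = t j) ∧
          ∀ x : Ba, (∀ j < w.2.1, x j = w.2.2 j) → x ∉ Fc A' w.1 := by
      intro l t hinvt
      obtain ⟨n, hnge, hfn⟩ :=
        frequently_atTop.1 hfr (l + (Finset.range l).sup t + 1)
      have hln : l < n := by omega
      have htn : ∀ j < l, t j < n := by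
        intro j hj
        have := Finset.le_sup (f := t) (Finset.mem_range.2 hj)
        omega
      refine ⟨(n, (zp A' n).2, fun j => if j < n then (if j < l then t j else 0) else (zp A' n).1 j),
        hln, hzp1 A' n, ?_, ?_, ?_⟩
      · intro j hj
        dsimp only at hj ⊢
        by_cases h1 : j < n
        · by_cases h2 : j < l
          · simpa [h1, h2] using hinvt j h2
          · simpa [h1, h2] using Nat.lt_of_le_of_lt (Nat.zero_le j) (id_lt_env g j)
        · have hz : (zp A' n).1 j ≤ (Finset.range (zp A' n).2).sup (zp A' n).1 :=
            Finset.le_sup (Finset.mem_range.2 hj)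
          have hfa : fA A' n = (zp A' n).2 + (Finset.range (zp A' n).2).sup (zp A' n).1 + 1 := rfl
          have h3 : (zp A' n).1 j < g n := by omega
          have h4 : g n ≤ env g n := le_env g n
          have h5 : env g n ≤ env g j := env_mono g (le_of_not_gt h1)
          simp only [if_neg h1]
          omega
      · intro j hj
        dsimp only
        simp [lt_trans hj hln, hj]
      · intro x hx
        dsimp only at hx
        apply hzp2 A' n x
        · intro k hk
          rw [hx k (lt_trans hk (hzp1 A' n))]
          by_cases h2 : k < l
          · simp only [if_pos hk, if_pos h2]
            exact htn k h2
          · simp only [if_pos hk, if_neg h2]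
            omega
        · intro k hk1 hk2
          rw [hx k hk2]
          simp [not_lt.2 hk1]
    set step : ℕ × ℕ × Ba → ℕ × ℕ × Ba := fun q =>
      if h : ∀ j < q.2.1, q.2.2 j < env g j
        then Classical.choose (hstep q.2.1 q.2.2 h) else q with hstepdef
    set seq : ℕ → ℕ × ℕ × Ba :=
      fun k => Nat.rec (0, 0, fun _ => 0) (fun _ ih => step ih) k with hseqdef
    have hinv : ∀ k, ∀ j < (seq k).2.1, (seq k).2.2 j < env g j := by
      intro k
      induction k with
      | zero =>
        intro j hj
        exact absurd hj (Nat.not_lt_zero j)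
      | succ k ih =>
        have hstepk : seq (k + 1) = Classical.choose (hstep (seq k).2.1 (seq k).2.2 ih) := by
          show step (seq k) = _
          rw [hstepdef]
          exact dif_pos ih
        rw [hstepk]
        exact (Classical.choose_spec (hstep (seq k).2.1 (seq k).2.2 ih)).2.2.1
    have hprops : ∀ k, (seq k).2.1 < (seq (k + 1)).1 ∧ (seq (k + 1)).1 < (seq (k + 1)).2.1 ∧
        (∀ j < (seq k).2.1, (seq (k + 1)).2.2 j = (seq k).2.2 j) ∧
        (∀ x : Ba, (∀ j < (seq (k + 1)).2.1, x j = (seq (k + 1)).2.2 j) →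
          x ∉ Fc A' (seq (k + 1)).1) := by
      intro k
      have h := Classical.choose_spec (hstep (seq k).2.1 (seq k).2.2 (hinv k))
      have hstepk : seq (k + 1) = Classical.choose (hstep (seq k).2.1 (seq k).2.2 (hinv k)) := by
        show step (seq k) = _
        rw [hstepdef]
        exact dif_pos (hinv k)
      rw [hstepk]
      exact ⟨h.1, h.2.1, h.2.2.2.1, h.2.2.2.2⟩
    have hl : StrictMono (fun k => (seq k).2.1) :=
      strictMono_nat_of_lt_succ fun k => lt_trans (hprops k).1 (hprops k).2.1
    have hstab : ∀ k k', k ≤ k' → ∀ j < (seq k).2.1, (seq k').2.2 j = (seq k).2.2 j := by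
      intro k k' hkk'
      induction k' with
      | zero =>
        have : k = 0 := Nat.le_zero.1 hkk'
        subst this
        intro j _; rfl
      | succ k' ih =>
        rcases Nat.eq_or_lt_of_le hkk' with rfl | h
        · intro j _; rfl
        · have hk' : k ≤ k' := Nat.lt_succ_iff.1 h
          intro j hj
          rw [(hprops k').2.2.1 j (lt_of_lt_of_le hj (hl.monotone hk'))]
          exact ih hk' j hj
    set x : Ba := fun j => (seq (j + 1)).2.2 j with hxdef
    have hxj : ∀ j, j < (seq (j + 1)).2.1 :=
      fun j => lt_of_lt_of_le (Nat.lt_succ_self j) hl.le_apply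
    have hxB : ∀ j, x j < env g j := fun j => hinv (j + 1) j (hxj j)
    have hxcyl : ∀ k, ∀ j < (seq (k + 1)).2.1, x j = (seq (k + 1)).2.2 j := by
      intro k j hj
      rcases le_total (j + 1) (k + 1) with h | h
      · exact (hstab (j + 1) (k + 1) h j (hxj j)).symm
      · exact hstab (k + 1) (j + 1) h j hj
    have havoid : ∀ k, x ∉ Fc A' (seq (k + 1)).1 :=
      fun k => (hprops k).2.2.2 x (hxcyl k)
    have hxA : x ∈ (A' : Set Ba) := hBA hxB
    obtain ⟨N, hN⟩ := Set.mem_iUnion.1 (hc4 A' hxA)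
    have hNle : N ≤ (seq (N + 1)).1 :=
      le_of_lt (lt_of_le_of_lt hl.le_apply (hprops N).1)
    exact havoid N (hc3 A' hNle hN)
  have hC : dNumber ≤ #(Set.range fA) := by
    apply csInf_le (OrderBot.bddBelow _)
    refine ⟨Set.range fA, fun g => ?_, rfl⟩
    obtain ⟨A, hA⟩ := hdom g
    exact ⟨fA A, ⟨A, rfl⟩, hA⟩
  exact hC.trans Cardinal.mk_range_le


lemma cfSet_nonempty : {c | ∃ S : Set (Set (ℕ → ℕ)), (∀ A ∈ S, IsMeagre A) ∧
    (∀ B : Set (ℕ → ℕ), IsMeagre B → ∃ A ∈ S, B ⊆ A) ∧ #S = c}.Nonempty :=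
  ⟨_, {A | IsMeagre A}, fun _ hA => hA, fun B hB => ⟨B, hB, subset_rfl⟩, rfl⟩

lemma dSet_nonempty : {c | ∃ C : Set (ℕ → ℕ),
    (∀ f : ℕ → ℕ, ∃ g ∈ C, ∀ᶠ n in atTop, f n ≤ g n) ∧ #C = c}.Nonempty :=
  ⟨_, Set.univ, fun f => ⟨f, Set.mem_univ _, Eventually.of_forall fun _ => le_rfl⟩, rfl⟩

lemma nonSet_nonempty : {c | ∃ A : Set (ℕ → ℕ), ¬ IsMeagre A ∧ #A = c}.Nonempty :=
  ⟨_, Set.univ, not_isMeagre_univ, rfl⟩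

lemma aleph0_le_nonMeager : ℵ₀ ≤ nonMeager := by
  apply le_csInf nonSet_nonempty
  rintro c ⟨A, hA, rfl⟩
  by_contra h
  rw [not_le] at h
  exact hA (isMeagre_of_countable (Cardinal.lt_aleph0_iff_set_finite.1 h).countable)

lemma aleph0_le_dNumber : ℵ₀ ≤ dNumber := by
  apply le_csInf dSet_nonempty
  rintro c ⟨C, hdom, rfl⟩
  by_contra h
  rw [not_le] at h
  have hfin : C.Finite := Cardinal.lt_aleph0_iff_set_finite.1 h
  classical
  obtain ⟨f, hfC, hdomf⟩ := hdom (fun n => (hfin.toFinset.sup fun f => f n) + 1)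
  obtain ⟨n, hn⟩ := hdomf.exists
  have hn' : (hfin.toFinset.sup fun f => f n) + 1 ≤ f n := hn
  have h1 : f n ≤ hfin.toFinset.sup (fun f => f n) :=
    Finset.le_sup (f := fun f => f n) (hfin.mem_toFinset.2 hfC)
  exact absurd (h1.trans_lt (Nat.lt_of_succ_le hn')) (lt_irrefl _)

lemma nonMeager_le {S : Set (Set Ba)} (hS : ∀ A ∈ S, IsMeagre A)
    (hcof : ∀ B : Set Ba, IsMeagre B → ∃ A ∈ S, B ⊆ A) : nonMeager ≤ #S := by
  have hpick : ∀ A : ↥S, ∃ x : Ba, x ∉ (A : Set Ba) := by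
    intro A
    by_contra h
    push_neg at h
    exact not_isMeagre_univ ((Set.eq_univ_of_forall h) ▸ hS A A.2)
  choose pick hpickspec using hpick
  have hX : ¬ IsMeagre (Set.range pick) := by
    intro h
    obtain ⟨A, hAS, hsub⟩ := hcof _ h
    exact hpickspec ⟨A, hAS⟩ (hsub ⟨⟨A, hAS⟩, rfl⟩)
  have h1 : nonMeager ≤ #(Set.range pick) :=
    csInf_le (OrderBot.bddBelow _) ⟨Set.range pick, hX, rfl⟩
  exact h1.trans Cardinal.mk_range_le

lemma upper : cfMeager ≤ max dNumber nonMeager := by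
  obtain ⟨D, hDdom, hDcard⟩ := csInf_mem dSet_nonempty
  obtain ⟨X, hXnm, hXcard⟩ := csInf_mem nonSet_nonempty
  set Sfam : Set (Set Ba) :=
    (fun q : (ℕ → ℕ) × (ℕ → ℕ) => MSet (EP q.1) q.2) '' (D ×ˢ X) with hSfam
  have hmeag : ∀ A ∈ Sfam, IsMeagre A := by
    rintro A ⟨⟨f, y⟩, -, rfl⟩
    exact isMeagre_MSet (EP_strictMono f)
  have hcof : ∀ B : Set Ba, IsMeagre B → ∃ A ∈ Sfam, B ⊆ A := by
    intro B hB
    obtain ⟨F, hFcl, hFnwd, hFmono, hFcov⟩ := meagre_cover hB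
    obtain ⟨e, y, he, havoid⟩ := exists_master hFcl hFnwd
    have hBM : B ⊆ MSet e y := by
      intro x hx
      obtain ⟨N, hN⟩ := Set.mem_iUnion.1 (hFcov hx)
      rw [MSet, Set.mem_setOf_eq, eventually_atTop]
      refine ⟨N, fun m hm hg => ?_⟩
      exact havoid m x hg (hFmono hm hN)
    -- choose y' ∈ X escaping MSet e y
    have hXnotsub : ¬ (X ⊆ MSet e y) := fun hsub => hXnm ((isMeagre_MSet he).mono hsub)
    obtain ⟨y', hy'X, hy'⟩ := Set.not_subset.1 hXnotsub
    have hfreq : ∃ᶠ m in atTop, Good e y y' m := by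
      have := hy'
      rw [MSet, Set.mem_setOf_eq, ← Filter.not_frequently, not_not] at this
      simpa using this
    have spec : ∀ p : ℕ, ∃ m, p ≤ e m ∧ Good e y y' m := by
      intro p
      obtain ⟨m, hm1, hm2⟩ := frequently_atTop.1 hfreq p
      exact ⟨m, le_trans hm1 he.le_apply, hm2⟩
    set g₀ : ℕ → ℕ := fun p => e (Classical.choose (spec p) + 1) with hg₀
    obtain ⟨f, hfD, hfdom⟩ := hDdom g₀
    have hsub2 : MSet e y ⊆ MSet (EP f) y' := by
      apply MSet_subset he (EP_strictMono f)
      obtain ⟨P₀, hP₀⟩ := eventually_atTop.1 hfdom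
      rw [eventually_atTop]
      refine ⟨P₀, fun n hn => ?_⟩
      have hEPn : P₀ ≤ EP f n := le_trans hn (EP_strictMono f).le_apply
      obtain ⟨hm1, hm2⟩ := Classical.choose_spec (spec (EP f n))
      refine ⟨Classical.choose (spec (EP f n)), hm1, ?_, hm2⟩
      calc e (Classical.choose (spec (EP f n)) + 1) = g₀ (EP f n) := rfl
        _ ≤ f (EP f n) := hP₀ _ hEPn
        _ ≤ env f (EP f n) := le_env f _
        _ = EP f (n + 1) := (EP_succ f n).symm
    exact ⟨MSet (EP f) y', ⟨(f, y'), Set.mk_mem_prod hfD hy'X, rfl⟩, hBM.trans hsub2⟩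
  have hcard : #Sfam ≤ max dNumber nonMeager := by
    calc #Sfam ≤ #(D ×ˢ X : Set ((ℕ → ℕ) × (ℕ → ℕ))) := Cardinal.mk_image_le
      _ = #D * #X := by
        rw [Cardinal.mk_congr (Equiv.Set.prod D X)]
        simp [Cardinal.mk_prod]
      _ = max dNumber nonMeager := by
        rw [hDcard, hXcard]
        exact Cardinal.mul_eq_max aleph0_le_dNumber aleph0_le_nonMeager
  exact le_trans (csInf_le (OrderBot.bddBelow _) ⟨Sfam, hmeag, hcof, rfl⟩) hcard

end CofMeager

/-- Dual Miller–Truss/Fremlin: `cf(M) = max(d, non(M))`. -/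
theorem stmt_15 : cfMeager = max dNumber nonMeager := by
  refine le_antisymm CofMeager.upper (max_le ?_ ?_)
  · apply le_csInf CofMeager.cfSet_nonempty
    rintro c ⟨S, hS, hcof, rfl⟩
    exact CofMeager.dNumber_le hS hcof
  · apply le_csInf CofMeager.cfSet_nonempty
    rintro c ⟨S, hS, hcof, rfl⟩
    exact CofMeager.nonMeager_le hS hcof
end
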